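/- arXiv:2007.14105 — 4 statements merged into one kernel-verified Lean document; each statement's English description precedes it below -/
import Mathlib

section
/- Let n ≥ 2 and let H₁,…,Hₙ, Y₁,…,Yₙ be an indecomposable representation of 𝔟ⁿ on ℂ³ with each H_i diagonalizable. Suppose Y₁ ≠ 0 and that the restriction to the first factor, i.e., the pair (H₁, Y₁), is a decomposable representation of 𝔟 on ℂ³. Then there exists an index j ∈ {2,…,n} such that: (i) the restriction to the factors 1 and j is multiplicity-free (every joint eigenspace {v ∈ ℂ³ : H₁v = θ₁v, H_jv = θ₂v} is at most one-dimensional) and the representation of 𝔟² given by H₁, H_j, Y₁, Y_j on ℂ³ is indecomposable; (ii) Y_i = 0 for every i ∉ {1, j}; and (iii) for every i ∉ {1, j} there is a scalar λ_i ∈ ℂ with H_i = λ_i·I₃. -/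
/-- A subspace invariant under both operators of a single pair `(T, S)`. -/
def InvariantPair {r : ℕ} (T S : Module.End ℂ (Fin r → ℂ))
    (W : Submodule ℂ (Fin r → ℂ)) : Prop :=
  (∀ x ∈ W, T x ∈ W) ∧ (∀ x ∈ W, S x ∈ W)


open Module Submodule

abbrev V3 := Fin 3 → ℂ

-- decide lemmas
lemma dec4 : ∀ x y z : Fin 3, x ≠ y → x ≠ z → y ≠ z → ∀ t, t = x ∨ t = y ∨ t = z := by decide

lemma dec5 : ∀ k l : Fin 3, k ≠ l → ∃ r, r ≠ k ∧ r ≠ l ∧ ∀ t, t = k ∨ t = l ∨ t = r := by decide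

lemma dec3 : ∀ a b c d : Fin 3, a ≠ b → c ≠ d → a ≠ c → a ≠ d → b ≠ c → ¬ b ≠ d := by
  decide

lemma dec1 : ∀ a b c d : Fin 3, a ≠ b → c ≠ d → ¬(a = c ∧ b = d) → ¬(a = d ∧ b = c) →
    ((∀ t, t = a ∨ t = b ∨ t = c ∨ t = d) ∧ (a = c ∨ a = d ∨ b = c ∨ b = d)) := by decide

lemma dec2 : ∀ k : Fin 3, ∃ l₁ l₂ : Fin 3, k ≠ l₁ ∧ k ≠ l₂ ∧ l₁ ≠ l₂ ∧
    ∀ t, t = k ∨ t = l₁ ∨ t = l₂ := by decide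

lemma sum3 {M : Type*} [AddCommMonoid M] (p q r : Fin 3) (hpq : p ≠ q) (hpr : p ≠ r)
    (hqr : q ≠ r) (f : Fin 3 → M) : ∑ k, f k = f p + f q + f r := by
  have : (Finset.univ : Finset (Fin 3)) = {p, q, r} := by
    apply Finset.ext; intro t
    simp only [Finset.mem_univ, Finset.mem_insert, Finset.mem_singleton, true_iff]
    exact dec4 p q r hpq hpr hqr t
  rw [this, Finset.sum_insert (by simp [hpq, hpr]), Finset.sum_insert (by simp [hqr]),
    Finset.sum_singleton, add_assoc]

/-- coordinate of image under a diagonal operator -/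
lemma aux_reprH {V : Type*} [AddCommGroup V] [Module ℂ V]
    (b : Basis (Fin 3) ℂ V) (T : Module.End ℂ V) (d : Fin 3 → ℂ)
    (hT : ∀ t, T (b t) = d t • b t) (x : V) (k : Fin 3) :
    b.repr (T x) k = d k * b.repr x k := by
  have hx : T x = ∑ t, b.repr x t • (d t • b t) := by
    conv_lhs => rw [← b.sum_repr x]
    rw [map_sum]
    exact Finset.sum_congr rfl fun t _ => by rw [map_smul, hT]
  rw [hx, map_sum]
  rw [Finsupp.finset_sum_apply]
  have : ∀ t, (b.repr (b.repr x t • (d t • b t))) k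
      = (if t = k then (d t * b.repr x t) else 0) := by
    intro t
    rw [map_smul, map_smul, b.repr_self]
    simp [Finsupp.single_apply]
    split <;> ring_nf <;> simp [mul_comm]
  rw [Finset.sum_congr rfl fun t _ => this t, Finset.sum_ite_eq' Finset.univ k]
  simp

lemma aux_mem_span {V : Type*} [AddCommGroup V] [Module ℂ V]
    (b : Basis (Fin 3) ℂ V) (s : Set (Fin 3)) (x : V) :
    x ∈ span ℂ (b '' s) ↔ ∀ k ∉ s, b.repr x k = 0 := by
  rw [b.mem_span_image]
  constructor
  · intro h k hk
    by_contra h0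
    exact hk (h (Finsupp.mem_support_iff.mpr h0))
  · intro h k hk
    by_contra hks
    exact Finsupp.mem_support_iff.mp hk (h k hks)

lemma aux_bcompl {V : Type*} [AddCommGroup V] [Module ℂ V]
    (b : Basis (Fin 3) ℂ V) (s : Set (Fin 3)) :
    IsCompl (span ℂ (b '' s)) (span ℂ (b '' sᶜ)) := by
  constructor
  · rw [disjoint_def]
    intro x h1 h2
    rw [aux_mem_span] at h1 h2
    have : b.repr x = 0 := by
      ext k
      by_cases hk : k ∈ s
      · exact h2 k (by simp [hk])
      · exact h1 k hk
    simpa using congrArg (b.repr.symm) this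
  · rw [codisjoint_iff, ← span_union, ← Set.image_union, Set.union_compl_self,
      Set.image_univ, b.span_eq]

lemma aux_spaninv {V : Type*} [AddCommGroup V] [Module ℂ V]
    (b : Basis (Fin 3) ℂ V) (s : Set (Fin 3)) (S : Module.End ℂ V)
    (h : ∀ l ∈ s, ∀ k ∉ s, b.repr (S (b l)) k = 0) :
    ∀ x ∈ span ℂ (b '' s), S x ∈ span ℂ (b '' s) := by
  intro x hx
  have hxr := (aux_mem_span b s x).mp hx
  have : S x = ∑ t, b.repr x t • S (b t) := by
    conv_lhs => rw [← b.sum_repr x, map_sum]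
    exact Finset.sum_congr rfl fun t _ => by rw [map_smul]
  rw [this]
  apply Submodule.sum_mem
  intro t _
  by_cases ht : t ∈ s
  · exact smul_mem _ _ ((aux_mem_span b s _).mpr (fun k hk => h t ht k hk))
  · rw [hxr t ht, zero_smul]; exact zero_mem _


/-- components of an element of an invariant subspace are in the subspace -/
lemma aux_comp {V : Type*} [AddCommGroup V] [Module ℂ V]
    (b : Basis (Fin 3) ℂ V) (W : Submodule ℂ V)
    (hsep : ∀ k l : Fin 3, k ≠ l → ∃ T : Module.End ℂ V, (∀ x ∈ W, T x ∈ W) ∧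
      ∃ d : Fin 3 → ℂ, (∀ t, T (b t) = d t • b t) ∧ d k ≠ d l) :
    ∀ x ∈ W, ∀ k, b.repr x k ≠ 0 → b k ∈ W := by
  intro x hx k hk
  obtain ⟨l₁, l₂, hkl₁, hkl₂, hl₁₂, hcov⟩ := dec2 k
  obtain ⟨T₁, hT₁W, d₁, hT₁, hd₁⟩ := hsep k l₁ hkl₁
  obtain ⟨T₂, hT₂W, d₂, hT₂, hd₂⟩ := hsep k l₂ hkl₂
  set x₁ := T₁ x - d₁ l₁ • x with hx₁def
  have hx₁W : x₁ ∈ W := sub_mem (hT₁W x hx) (smul_mem _ _ hx)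
  have hr₁ : ∀ t, b.repr x₁ t = (d₁ t - d₁ l₁) * b.repr x t := by
    intro t
    rw [hx₁def, map_sub, map_smul, Finsupp.sub_apply, Finsupp.smul_apply,
      aux_reprH b T₁ d₁ hT₁]
    ring_nf
  set x₂ := T₂ x₁ - d₂ l₂ • x₁ with hx₂def
  have hx₂W : x₂ ∈ W := sub_mem (hT₂W x₁ hx₁W) (smul_mem _ _ hx₁W)
  have hr₂ : ∀ t, b.repr x₂ t = (d₂ t - d₂ l₂) * b.repr x₁ t := by
    intro t
    rw [hx₂def, map_sub, map_smul, Finsupp.sub_apply, Finsupp.smul_apply,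
      aux_reprH b T₂ d₂ hT₂]
    simp [smul_eq_mul]
    ring
  have hc : b.repr x₂ k ≠ 0 := by
    rw [hr₂, hr₁]
    exact mul_ne_zero (sub_ne_zero.mpr hd₂) (mul_ne_zero (sub_ne_zero.mpr hd₁) hk)
  have hsum : x₂ = b.repr x₂ k • b k := by
    conv_lhs => rw [← b.sum_repr x₂]
    apply Finset.sum_eq_single_of_mem k (Finset.mem_univ k)
    intro t _ htk
    rcases hcov t with h | h | h
    · exact absurd h htk
    · rw [h]; simp [hr₂, hr₁]
    · rw [h]; simp [hr₂]
  obtain ⟨c, hc0, hceq⟩ : ∃ c : ℂ, c ≠ 0 ∧ x₂ = c • b k := ⟨_, hc, hsum⟩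
  have : b k = c⁻¹ • x₂ := by rw [hceq, smul_smul, inv_mul_cancel₀ hc0, one_smul]
  rw [this]
  exact smul_mem _ _ hx₂W

lemma aux_part {V : Type*} [AddCommGroup V] [Module ℂ V]
    (b : Basis (Fin 3) ℂ V) (W₁ W₂ : Submodule ℂ V) (hcompl : IsCompl W₁ W₂)
    (hc₁ : ∀ x ∈ W₁, ∀ k, b.repr x k ≠ 0 → b k ∈ W₁)
    (hc₂ : ∀ x ∈ W₂, ∀ k, b.repr x k ≠ 0 → b k ∈ W₂) :
    ∀ k, b k ∈ W₁ ∨ b k ∈ W₂ := by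
  intro k
  have : b k ∈ W₁ ⊔ W₂ := by rw [hcompl.sup_eq_top]; trivial
  obtain ⟨y, hy, z, hz, hyz⟩ := Submodule.mem_sup.mp this
  by_cases hyk : b.repr y k ≠ 0
  · exact Or.inl (hc₁ y hy k hyk)
  · right
    apply hc₂ z hz k
    push_neg at hyk
    have : b.repr y k + b.repr z k = 1 := by
      have := congrArg (fun v => b.repr v k) hyz
      simpa [b.repr_self, Finsupp.single_apply] using this
    rw [hyk, zero_add] at this
    rw [this]; exact one_ne_zero

lemma aux_notboth {V : Type*} [AddCommGroup V] [Module ℂ V]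
    (b : Basis (Fin 3) ℂ V) (W₁ W₂ : Submodule ℂ V) (hcompl : IsCompl W₁ W₂)
    (k : Fin 3) (h1 : b k ∈ W₁) (h2 : b k ∈ W₂) : False := by
  exact b.ne_zero k (Submodule.disjoint_def.mp hcompl.disjoint _ h1 h2)

lemma aux_nonbot {V : Type*} [AddCommGroup V] [Module ℂ V]
    (b : Basis (Fin 3) ℂ V) (W : Submodule ℂ V) (hW : W ≠ ⊥)
    (hc : ∀ x ∈ W, ∀ k, b.repr x k ≠ 0 → b k ∈ W) : ∃ k, b k ∈ W := by
  obtain ⟨x, hxW, hx0⟩ := Submodule.exists_mem_ne_zero_of_ne_bot hW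
  have : ∃ k, b.repr x k ≠ 0 := by
    by_contra h
    push_neg at h
    exact hx0 (by simpa using congrArg b.repr.symm (Finsupp.ext h : b.repr x = 0))
  obtain ⟨k, hk⟩ := this
  exact ⟨k, hc x hxW k hk⟩




lemma aux_const {α : Sort*} (g : Fin 3 → α) (kA lA kB lB : Fin 3)
    (hcov : ∀ t, t = kA ∨ t = lA ∨ t = kB ∨ t = lB)
    (hcom : kA = kB ∨ kA = lB ∨ lA = kB ∨ lA = lB)
    (hA : g kA = g lA) (hB : g kB = g lB) : ∀ t t', g t = g t' := by
  have h2 : g kB = g kA := by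
    rcases hcom with h | h | h | h
    · rw [← h]
    · rw [hB, ← h]
    · rw [← h, ← hA]
    · rw [hB, ← h, ← hA]
  have h3 : g lB = g kA := by rw [← hB]; exact h2
  have key : ∀ t, g t = g kA := by
    intro t
    rcases hcov t with h | h | h | h <;> rw [h]
    · exact hA.symm
    · exact h2
    · exact h3
  intro t t'
  rw [key t, key t']

lemma aux_conn {V : Type*} [AddCommGroup V] [Module ℂ V]
    (b : Basis (Fin 3) ℂ V) (W₁ W₂ : Submodule ℂ V)
    (hpart : ∀ k, b k ∈ W₁ ∨ b k ∈ W₂)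
    (hnb : ∀ k, b k ∈ W₁ → b k ∈ W₂ → False)
    (h1 : ∃ k, b k ∈ W₁) (h2 : ∃ k, b k ∈ W₂)
    (kA lA kB lB : Fin 3)
    (hcov : ∀ t, t = kA ∨ t = lA ∨ t = kB ∨ t = lB)
    (hcom : kA = kB ∨ kA = lB ∨ lA = kB ∨ lA = lB)
    (eA : ∀ W, (W = W₁ ∨ W = W₂) → b lA ∈ W → b kA ∈ W)
    (eB : ∀ W, (W = W₁ ∨ W = W₂) → b lB ∈ W → b kB ∈ W) : False := by
  have EA : b lA ∈ W₁ ↔ b kA ∈ W₁ := by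
    constructor
    · exact eA W₁ (Or.inl rfl)
    · intro hkA
      rcases hpart lA with h | h
      · exact h
      · exact absurd (eA W₂ (Or.inr rfl) h) (fun hh => (hnb kA hkA hh))
  have EB : b lB ∈ W₁ ↔ b kB ∈ W₁ := by
    constructor
    · exact eB W₁ (Or.inl rfl)
    · intro hkB
      rcases hpart lB with h | h
      · exact h
      · exact absurd (eB W₂ (Or.inr rfl) h) (fun hh => (hnb kB hkB hh))
  have key := aux_const (fun t => b t ∈ W₁) kA lA kB lB hcov hcom
    (by rw [eq_iff_iff]; exact EA.symm)
    (by rw [eq_iff_iff]; exact EB.symm)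
  obtain ⟨k1, hk1⟩ := h1
  obtain ⟨k2, hk2⟩ := h2
  have : b k2 ∈ W₁ := by
    have e := key k2 k1
    simp only [eq_iff_iff] at e
    exact e.mpr hk1
  exact hnb k2 this hk2

lemma aux_decomp {n : ℕ} (b : Basis (Fin 3) ℂ (Fin 3 → ℂ))
    (H Y : Fin n → Module.End ℂ (Fin 3 → ℂ))
    (s : Set (Fin 3)) (k₁ k₂ : Fin 3) (hk₁ : k₁ ∈ s) (hk₂ : k₂ ∉ s)
    (hcr : ∀ i l k, l ∈ s → k ∉ s →
      b.repr (H i (b l)) k = 0 ∧ b.repr (Y i (b l)) k = 0)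
    (hcr' : ∀ i l k, l ∉ s → k ∈ s →
      b.repr (H i (b l)) k = 0 ∧ b.repr (Y i (b l)) k = 0) :
    ∃ W₁ W₂ : Submodule ℂ (Fin 3 → ℂ), W₁ ≠ ⊥ ∧ W₂ ≠ ⊥ ∧ IsCompl W₁ W₂ ∧
      (∀ i, InvariantPair (H i) (Y i) W₁) ∧ (∀ i, InvariantPair (H i) (Y i) W₂) := by
  refine ⟨span ℂ (b '' s), span ℂ (b '' sᶜ), ?_, ?_, aux_bcompl b s, ?_, ?_⟩
  · rw [Submodule.ne_bot_iff]
    exact ⟨b k₁, subset_span ⟨k₁, hk₁, rfl⟩, b.ne_zero k₁⟩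
  · rw [Submodule.ne_bot_iff]
    exact ⟨b k₂, subset_span ⟨k₂, hk₂, rfl⟩, b.ne_zero k₂⟩
  · intro i
    exact ⟨aux_spaninv b s (H i) (fun l hl k hk => (hcr i l k hl hk).1),
      aux_spaninv b s (Y i) (fun l hl k hk => (hcr i l k hl hk).2)⟩
  · intro i
    exact ⟨aux_spaninv b sᶜ (H i) (fun l hl k hk => (hcr' i l k hl (not_not.mp hk)).1),
      aux_spaninv b sᶜ (Y i) (fun l hl k hk => (hcr' i l k hl (not_not.mp hk)).2)⟩

lemma maxGen_eq_eigen {V : Type*} [AddCommGroup V] [Module ℂ V] [FiniteDimensional ℂ V]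
    (f : Module.End ℂ V) (hf : ⨆ μ : ℂ, f.eigenspace μ = ⊤) (μ : ℂ) :
    f.maxGenEigenspace μ = f.eigenspace μ := by
  refine le_antisymm ?_ (f.genEigenspace μ |>.monotone le_top)
  intro x hx
  have hxt : x ∈ ⨆ ν : ℂ, f.eigenspace ν := hf ▸ Submodule.mem_top
  rw [Submodule.mem_iSup_iff_exists_finsupp] at hxt
  obtain ⟨c, hc, hsum⟩ := hxt
  have hindep := f.independent_genEigenspace (⊤ : ℕ∞)
  have hdisj : Disjoint (f.maxGenEigenspace μ) (⨆ ν ≠ μ, f.maxGenEigenspace ν) :=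
    hindep μ
  have hmem : x - c μ ∈ f.maxGenEigenspace μ :=
    sub_mem hx ((f.genEigenspace μ).monotone le_top (hc μ))
  have hmem2 : x - c μ ∈ ⨆ ν ≠ μ, f.maxGenEigenspace ν := by
    have : x - c μ = ∑ ν ∈ c.support.erase μ, c ν := by
      rw [← hsum]
      by_cases hμ : μ ∈ c.support
      · rw [Finsupp.sum, ← Finset.add_sum_erase _ _ hμ]
        abel
      · rw [Finsupp.notMem_support_iff.mp hμ, sub_zero, Finsupp.sum,
          Finset.erase_eq_of_notMem hμ]
    rw [this]
    apply Submodule.sum_mem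
    intro ν hν
    have hvμ : ν ≠ μ := Finset.ne_of_mem_erase hν
    have : f.eigenspace ν ≤ ⨆ ν' ≠ μ, f.maxGenEigenspace ν' := by
      refine le_trans ((f.genEigenspace ν).monotone le_top) ?_
      exact le_iSup_of_le ν (le_iSup_of_le hvμ le_rfl)
    exact this (hc ν)
  have hz := Submodule.disjoint_def.mp hdisj _ hmem hmem2
  have hx' : x = (c μ : V) := by
    rw [← sub_eq_zero]; exact hz
  rw [hx']
  exact hc μ


set_option maxHeartbeats 1000000 in
lemma exists_eigenbasis {n : ℕ} (H : Fin n → Module.End ℂ (Fin 3 → ℂ))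
    (hHH : ∀ i j, Commute (H i) (H j))
    (hdiag : ∀ i, (⨆ μ : ℂ, Module.End.eigenspace (H i) μ) = ⊤) :
    ∃ (b : Basis (Fin 3) ℂ (Fin 3 → ℂ)) (w : Fin 3 → Fin n → ℂ),
      ∀ k i, H i (b k) = w k i • b k := by
  classical
  have h' : ∀ i, ⨆ μ, Module.End.maxGenEigenspace (H i) μ = ⊤ := by
    intro i
    rw [iSup_congr fun μ => maxGen_eq_eigen (H i) (hdiag i) μ]
    exact hdiag i
  have hsup : ⨆ χ : Fin n → ℂ, ⨅ i, Module.End.maxGenEigenspace (H i) (χ i) = ⊤ :=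
    Module.End.iSup_iInf_maxGenEigenspace_eq_top_of_iSup_maxGenEigenspace_eq_top_of_commute
      H (fun i j _ => hHH i j) h'
  set t : Set (Fin 3 → ℂ) := {x | ∃ χ : Fin n → ℂ, ∀ i, H i x = χ i • x} with ht
  have hspan : ⊤ ≤ span ℂ t := by
    rw [← hsup]
    apply iSup_le
    intro χ
    intro x hx
    apply subset_span
    refine ⟨χ, fun i => ?_⟩
    have : x ∈ Module.End.maxGenEigenspace (H i) (χ i) := (Submodule.mem_iInf _).mp hx i
    rw [maxGen_eq_eigen (H i) (hdiag i)] at this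
    exact Module.End.mem_eigenspace_iff.mp this
  have hli : LinearIndepOn ℂ id (∅ : Set (Fin 3 → ℂ)) :=
    linearIndepOn_empty ..
  have hct : hli.extend (Set.empty_subset t) ⊆ t := hli.extend_subset _
  let B : Basis (hli.extend (Set.empty_subset t)) ℂ (Fin 3 → ℂ) :=
    Basis.extendLe hli (Set.empty_subset t) hspan
  have hfin : (hli.extend (Set.empty_subset t)).Finite := by
    have hBli := B.linearIndependent
    rw [show ⇑B = ((↑) : hli.extend (Set.empty_subset t) → (Fin 3 → ℂ)) from
      Basis.coe_extendLe hli (Set.empty_subset t) hspan] at hBli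
    exact hBli.setFinite (R := ℂ)
  haveI : Fintype (hli.extend (Set.empty_subset t)) := hfin.fintype
  have hcard : Fintype.card (hli.extend (Set.empty_subset t)) = 3 := by
    have h1 := Module.finrank_eq_card_basis B
    rw [Module.finrank_fin_fun] at h1
    omega
  let e : Fin 3 ≃ hli.extend (Set.empty_subset t) := (Fintype.equivFinOfCardEq hcard).symm
  have hex : ∀ k : Fin 3, ∃ χ : Fin n → ℂ,
      ∀ i, H i ((B.reindex e.symm) k) = χ i • (B.reindex e.symm) k := by
    intro k
    have hbk : (B.reindex e.symm) k = ↑(e k) := by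
      rw [Module.Basis.reindex_apply, Equiv.symm_symm, Basis.extendLe_apply_self]
    rw [hbk]
    exact hct (e k).2
  choose w hw using hex
  exact ⟨B.reindex e.symm, w, hw⟩



lemma fin3cases : ∀ l : Fin 3, l = 0 ∨ l = 1 ∨ l = 2 := by decide


/-- Case I of the repeated-weight analysis: all nonzero entries are `A i₀ r p`, `A i₀ r q`. -/
lemma caseI {n : ℕ} (H Y : Fin n → Module.End ℂ (Fin 3 → ℂ))
    (b : Basis (Fin 3) ℂ (Fin 3 → ℂ)) (w : Fin 3 → Fin n → ℂ)
    (A : Fin n → Fin 3 → Fin 3 → ℂ)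
    (hAdef : ∀ i k l, A i k l = b.repr (Y i (b l)) k)
    (hw : ∀ k i, H i (b k) = w k i • b k)
    (p q r : Fin 3) (hpq : p ≠ q) (hpr : p ≠ r) (hqr : q ≠ r)
    (hwpq : ∀ i, w p i = w q i) (i₀ : Fin n)
    (honly : ∀ i k l, A i k l ≠ 0 → (i = i₀ ∧ k = r ∧ (l = p ∨ l = q))) :
    ∃ W₁ W₂ : Submodule ℂ (Fin 3 → ℂ), W₁ ≠ ⊥ ∧ W₂ ≠ ⊥ ∧ IsCompl W₁ W₂ ∧
      (∀ i, InvariantPair (H i) (Y i) W₁) ∧ (∀ i, InvariantPair (H i) (Y i) W₂) := by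
  classical
  have hYb : ∀ i l, Y i (b l) = ∑ k, A i k l • b k := by
    intro i l
    conv_lhs => rw [← b.sum_repr (Y i (b l))]
    exact Finset.sum_congr rfl fun k _ => by rw [hAdef]
  have hArp : ∀ i k l, ¬(i = i₀ ∧ k = r ∧ (l = p ∨ l = q)) → A i k l = 0 := by
    intro i k l h
    by_contra h0
    exact h (honly i k l h0)
  set c := A i₀ r p with hc
  set d := A i₀ r q with hd
  have hY0p : Y i₀ (b p) = c • b r := by
    rw [hYb i₀ p, sum3 p q r hpq hpr hqr]
    rw [hArp i₀ p p (fun h => hpr h.2.1), hArp i₀ q p (fun h => hqr h.2.1)]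
    simp [hc]
  have hY0q : Y i₀ (b q) = d • b r := by
    rw [hYb i₀ q, sum3 p q r hpq hpr hqr]
    rw [hArp i₀ p q (fun h => hpr h.2.1), hArp i₀ q q (fun h => hqr h.2.1)]
    simp [hd]
  have hYr : ∀ i, Y i (b r) = 0 := by
    intro i
    rw [hYb i r]
    apply Finset.sum_eq_zero
    intro k _
    rw [hArp i k r (fun h => by rcases h.2.2 with h' | h'; exacts [hpr h'.symm, hqr h'.symm]),
      zero_smul]
  have hYi : ∀ i, i ≠ i₀ → ∀ l, Y i (b l) = 0 := by
    intro i hi l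
    rw [hYb i l]
    apply Finset.sum_eq_zero
    intro k _
    rw [hArp i k l (fun h => hi h.1), zero_smul]
  have hreprH : ∀ i l k, k ≠ l → b.repr (H i (b l)) k = 0 := by
    intro i l k hk
    rw [hw l i, map_smul, b.repr_self]
    simp [Finsupp.single_apply, hk, Ne.symm hk]
  by_cases hd0 : d = 0
  · -- W₁ = span {b q}
    apply aux_decomp b H Y {q} q r rfl (by simp [Ne.symm hqr])
    · intro i l k hl hk
      rw [Set.mem_singleton_iff] at hl
      subst hl
      refine ⟨hreprH i l k (by simpa using hk), ?_⟩
      rw [← hAdef]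
      by_cases hcase : i = i₀ ∧ k = r
      · rw [hcase.1, hcase.2]
        exact hd0
      · exact hArp i k l (fun h => hcase ⟨h.1, h.2.1⟩)
    · intro i l k hl hk
      rw [Set.mem_singleton_iff] at hk
      subst hk
      refine ⟨hreprH i l k (fun h => hl (h ▸ rfl)), ?_⟩
      rw [← hAdef]
      exact hArp i k l (fun h => hqr h.2.1)
  · by_cases hc0 : c = 0
    · -- W₁ = span {b p}
      apply aux_decomp b H Y {p} p r rfl (by simp [Ne.symm hpr])
      · intro i l k hl hk
        rw [Set.mem_singleton_iff] at hl
        subst hl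
        refine ⟨hreprH i l k (by simpa using hk), ?_⟩
        rw [← hAdef]
        by_cases hcase : i = i₀ ∧ k = r
        · rw [hcase.1, hcase.2]
          exact hc0
        · exact hArp i k l (fun h => hcase ⟨h.1, h.2.1⟩)
      · intro i l k hl hk
        rw [Set.mem_singleton_iff] at hk
        subst hk
        refine ⟨hreprH i l k (fun h => hl (h ▸ rfl)), ?_⟩
        rw [← hAdef]
        exact hArp i k l (fun h => hpr h.2.1)
    · -- both nonzero: W₁ = span {u}, u = d • b p - c • b q
      set u := d • b p - c • b q with hu
      have hcard : Fintype.card (Fin 3) = finrank ℂ (Fin 3 → ℂ) := by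
        simp [Module.finrank_fin_fun]
      have hli : LinearIndependent ℂ ![u, b p, b r] := by
        apply Fintype.linearIndependent_iff.mpr
        intro g hg
        rw [Fin.sum_univ_three] at hg
        simp only [Matrix.cons_val_zero, Matrix.cons_val_one, Matrix.head_cons,
          Matrix.cons_val_two, Matrix.tail_cons] at hg
        rw [hu] at hg
        have eqq := congrArg (fun v => b.repr v q) hg
        have eqp := congrArg (fun v => b.repr v p) hg
        have eqr := congrArg (fun v => b.repr v r) hg
        simp only [map_add, map_sub, map_smul, b.repr_self, Finsupp.add_apply,
          Finsupp.sub_apply, Finsupp.smul_apply, Finsupp.single_apply, map_zero,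
          Finsupp.coe_zero, Pi.zero_apply, smul_eq_mul, if_pos rfl, if_neg hpq,
          if_neg hpr, if_neg hqr, if_neg (Ne.symm hpq), if_neg (Ne.symm hpr),
          if_neg (Ne.symm hqr), if_true, mul_one, mul_zero, add_zero, zero_add,
          sub_zero, zero_sub, ite_true] at eqq eqp eqr
        have hg0 : g 0 = 0 := by
          have h' : g 0 * c = 0 := by linear_combination -eqq
          rcases mul_eq_zero.mp h' with h | h
          · exact h
          · exact absurd h hc0
        have hg1 : g 1 = 0 := by linear_combination eqp - d * hg0
        have hg2 : g 2 = 0 := eqr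
        intro i
        rcases fin3cases i with h | h | h <;> rw [h] <;> assumption
      set b' := basisOfLinearIndependentOfCardEqFinrank hli hcard with hb'
      have hb'c : ⇑b' = ![u, b p, b r] := coe_basisOfLinearIndependentOfCardEqFinrank hli hcard
      have hb'0 : b' 0 = u := by rw [hb'c]; rfl
      have hb'1 : b' 1 = b p := by rw [hb'c]; rfl
      have hb'2 : b' 2 = b r := by rw [hb'c]; rfl
      have hHu : ∀ i, H i u = w p i • u := by
        intro i
        rw [hu, map_sub, map_smul, map_smul, hw p i, hw q i, smul_smul, smul_smul,
          smul_sub, smul_smul, smul_smul, ← hwpq i, mul_comm d, mul_comm c]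
      have hYu : ∀ i, Y i u = 0 := by
        intro i
        by_cases hi : i = i₀
        · subst hi
          rw [hu, map_sub, map_smul, map_smul, hY0p, hY0q, smul_smul, smul_smul,
            mul_comm, sub_self]
        · rw [hu, map_sub, map_smul, map_smul, hYi i hi, hYi i hi, smul_zero, smul_zero,
            sub_self]
      apply aux_decomp b' H Y {0} 0 1 rfl (by simp)
      · intro i l k hl hk
        rw [Set.mem_singleton_iff] at hl
        subst hl
        rw [Set.mem_singleton_iff] at hk
        constructor
        · rw [hb'0, hHu i, ← hb'0, map_smul, b'.repr_self]
          simp [Finsupp.single_apply, hk, Ne.symm hk]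
        · rw [hb'0, hYu i]
          simp
      · intro i l k hl hk
        rw [Set.mem_singleton_iff] at hk
        subst hk
        rw [Set.mem_singleton_iff] at hl
        rcases fin3cases l with h | h | h
        · exact absurd h hl
        · subst h
          constructor
          · rw [hb'1, hw p i, ← hb'1, map_smul, b'.repr_self]
            simp [Finsupp.single_apply]
          · by_cases hi : i = i₀
            · subst hi
              rw [hb'1, hY0p, ← hb'2, map_smul, b'.repr_self]
              simp [Finsupp.single_apply]
            · rw [hb'1, hYi i hi]
              simp
        · subst h
          constructor
          · rw [hb'2, hw r i, ← hb'2, map_smul, b'.repr_self]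
            simp [Finsupp.single_apply]
          · rw [hb'2, hYr i]
            simp

/-- Case II of the repeated-weight analysis: all nonzero entries are `A i₀ p r`, `A i₀ q r`,
and `A i₀ p r ≠ 0`. -/
lemma caseII {n : ℕ} (H Y : Fin n → Module.End ℂ (Fin 3 → ℂ))
    (b : Basis (Fin 3) ℂ (Fin 3 → ℂ)) (w : Fin 3 → Fin n → ℂ)
    (A : Fin n → Fin 3 → Fin 3 → ℂ)
    (hAdef : ∀ i k l, A i k l = b.repr (Y i (b l)) k)
    (hw : ∀ k i, H i (b k) = w k i • b k)
    (p q r : Fin 3) (hpq : p ≠ q) (hpr : p ≠ r) (hqr : q ≠ r)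
    (hwpq : ∀ i, w p i = w q i) (i₀ : Fin n)
    (honly : ∀ i k l, A i k l ≠ 0 → (i = i₀ ∧ l = r ∧ (k = p ∨ k = q)))
    (hc0 : A i₀ p r ≠ 0) :
    ∃ W₁ W₂ : Submodule ℂ (Fin 3 → ℂ), W₁ ≠ ⊥ ∧ W₂ ≠ ⊥ ∧ IsCompl W₁ W₂ ∧
      (∀ i, InvariantPair (H i) (Y i) W₁) ∧ (∀ i, InvariantPair (H i) (Y i) W₂) := by
  classical
  have hYb : ∀ i l, Y i (b l) = ∑ k, A i k l • b k := by
    intro i l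
    conv_lhs => rw [← b.sum_repr (Y i (b l))]
    exact Finset.sum_congr rfl fun k _ => by rw [hAdef]
  have hArp : ∀ i k l, ¬(i = i₀ ∧ l = r ∧ (k = p ∨ k = q)) → A i k l = 0 := by
    intro i k l h
    by_contra h0
    exact h (honly i k l h0)
  set c := A i₀ p r with hc
  set d := A i₀ q r with hd
  have hYnr : ∀ i l, l ≠ r → Y i (b l) = 0 := by
    intro i l hl
    rw [hYb i l]
    apply Finset.sum_eq_zero
    intro k _
    rw [hArp i k l (fun h => hl h.2.1), zero_smul]
  have hYi : ∀ i, i ≠ i₀ → ∀ l, Y i (b l) = 0 := by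
    intro i hi l
    rw [hYb i l]
    apply Finset.sum_eq_zero
    intro k _
    rw [hArp i k l (fun h => hi h.1), zero_smul]
  have hY0r : Y i₀ (b r) = c • b p + d • b q := by
    rw [hYb i₀ r, sum3 p q r hpq hpr hqr]
    rw [hArp i₀ r r (fun h => by rcases h.2.2 with h' | h'; exacts [hpr h'.symm, hqr h'.symm])]
    simp [hc, hd]
  have hreprH : ∀ i l k, k ≠ l → b.repr (H i (b l)) k = 0 := by
    intro i l k hk
    rw [hw l i, map_smul, b.repr_self]
    simp [Finsupp.single_apply, hk, Ne.symm hk]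
  by_cases hd0 : d = 0
  · -- W₁ = span {b q}
    apply aux_decomp b H Y {q} q r rfl (by simp [Ne.symm hqr])
    · intro i l k hl hk
      rw [Set.mem_singleton_iff] at hl
      subst hl
      refine ⟨hreprH i l k (by simpa using hk), ?_⟩
      rw [← hAdef]
      exact hArp i k l (fun h => hqr h.2.1)
    · intro i l k hl hk
      rw [Set.mem_singleton_iff] at hk
      subst hk
      refine ⟨hreprH i l k (fun h => hl (h ▸ rfl)), ?_⟩
      rw [← hAdef]
      by_cases hcase : i = i₀ ∧ l = r
      · rw [hcase.1, hcase.2]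
        exact hd0
      · exact hArp i k l (fun h => hcase ⟨h.1, h.2.1⟩)
  · -- both nonzero: W₁ = span {b q}, W₂ = span {v, b r}, v = c • b p + d • b q
    set v := c • b p + d • b q with hv
    have hcard : Fintype.card (Fin 3) = finrank ℂ (Fin 3 → ℂ) := by
      simp [Module.finrank_fin_fun]
    have hli : LinearIndependent ℂ ![b q, v, b r] := by
      apply Fintype.linearIndependent_iff.mpr
      intro g hg
      rw [Fin.sum_univ_three] at hg
      simp only [Matrix.cons_val_zero, Matrix.cons_val_one, Matrix.head_cons,
        Matrix.cons_val_two, Matrix.tail_cons] at hg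
      rw [hv] at hg
      have eqq := congrArg (fun x => b.repr x q) hg
      have eqp := congrArg (fun x => b.repr x p) hg
      have eqr := congrArg (fun x => b.repr x r) hg
      simp only [map_add, map_smul, b.repr_self, Finsupp.add_apply,
        Finsupp.smul_apply, Finsupp.single_apply, map_zero,
        Finsupp.coe_zero, Pi.zero_apply, smul_eq_mul, if_pos rfl, if_neg hpq,
        if_neg hpr, if_neg hqr, if_neg (Ne.symm hpq), if_neg (Ne.symm hpr),
        if_neg (Ne.symm hqr), if_true, mul_one, mul_zero, add_zero, zero_add,
        sub_zero, ite_true] at eqq eqp eqr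
      have hg1 : g 1 = 0 := by
        have h' : g 1 * c = 0 := by linear_combination eqp
        rcases mul_eq_zero.mp h' with h | h
        · exact h
        · exact absurd h hc0
      have hg0 : g 0 = 0 := by linear_combination eqq - d * hg1
      have hg2 : g 2 = 0 := eqr
      intro i
      rcases fin3cases i with h | h | h <;> rw [h] <;> assumption
    set b' := basisOfLinearIndependentOfCardEqFinrank hli hcard with hb'
    have hb'c : ⇑b' = ![b q, v, b r] := coe_basisOfLinearIndependentOfCardEqFinrank hli hcard
    have hb'0 : b' 0 = b q := by rw [hb'c]; rfl
    have hb'1 : b' 1 = v := by rw [hb'c]; rfl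
    have hb'2 : b' 2 = b r := by rw [hb'c]; rfl
    have hHv : ∀ i, H i v = w p i • v := by
      intro i
      rw [hv, map_add, map_smul, map_smul, hw p i, hw q i, smul_smul, smul_smul,
        smul_add, smul_smul, smul_smul, mul_comm c, mul_comm d, ← hwpq i]
    have hYv : ∀ i, Y i v = 0 := by
      intro i
      rw [hv, map_add, map_smul, map_smul]
      by_cases hi : i = i₀
      · subst hi
        rw [hYnr _ p hpr, hYnr _ q hqr, smul_zero, smul_zero, add_zero]
      · rw [hYi i hi, hYi i hi, smul_zero, smul_zero, add_zero]
    apply aux_decomp b' H Y {0} 0 1 rfl (by simp)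
    · intro i l k hl hk
      rw [Set.mem_singleton_iff] at hl
      subst hl
      rw [Set.mem_singleton_iff] at hk
      constructor
      · rw [hb'0, hw q i, ← hb'0, map_smul, b'.repr_self]
        simp [Finsupp.single_apply, hk, Ne.symm hk]
      · rw [hb'0, hYnr i q hqr]
        simp
    · intro i l k hl hk
      rw [Set.mem_singleton_iff] at hk
      subst hk
      rw [Set.mem_singleton_iff] at hl
      rcases fin3cases l with h | h | h
      · exact absurd h hl
      · subst h
        constructor
        · rw [hb'1, hHv i, ← hb'1, map_smul, b'.repr_self]
          simp [Finsupp.single_apply]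
        · rw [hb'1, hYv i]
          simp
      · subst h
        constructor
        · rw [hb'2, hw r i, ← hb'2, map_smul, b'.repr_self]
          simp [Finsupp.single_apply]
        · by_cases hi : i = i₀
          · subst hi
            rw [hb'2, hY0r, ← hb'1, b'.repr_self]
            simp [Finsupp.single_apply]
          · rw [hb'2, hYi i hi]
            simp

set_option maxHeartbeats 1000000 in
/-- For an indecomposable representation of `𝔟ⁿ` (`n = m + 2 ≥ 2`) on `ℂ³`
with each `H_i` diagonalizable, `Y₁ ≠ 0`, and decomposable restriction to the first factor,
there is an index `j ≠ 0` such that the restriction to `{0, j}` is multiplicity-free and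
indecomposable, and all other factors act by scalars (resp. zero). -/
theorem statement8 {m : ℕ} (H Y : Fin (m + 2) → Module.End ℂ (Fin 3 → ℂ))
    (hHH : ∀ i j, Commute (H i) (H j)) (hYY : ∀ i j, Commute (Y i) (Y j))
    (hHY : ∀ i j, i ≠ j → Commute (H i) (Y j))
    (hrel : ∀ i, H i * Y i - Y i * H i = -(Y i))
    (hdiag : ∀ i, (⨆ μ : ℂ, Module.End.eigenspace (H i) μ) = ⊤)
    (hY₁ : Y 0 ≠ 0)
    (hindec : ¬ ∃ W₁ W₂ : Submodule ℂ (Fin 3 → ℂ), W₁ ≠ ⊥ ∧ W₂ ≠ ⊥ ∧ IsCompl W₁ W₂ ∧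
      (∀ i, InvariantPair (H i) (Y i) W₁) ∧ (∀ i, InvariantPair (H i) (Y i) W₂))
    (hdec₁ : ∃ W₁ W₂ : Submodule ℂ (Fin 3 → ℂ), W₁ ≠ ⊥ ∧ W₂ ≠ ⊥ ∧ IsCompl W₁ W₂ ∧
      InvariantPair (H 0) (Y 0) W₁ ∧ InvariantPair (H 0) (Y 0) W₂) :
    ∃ j : Fin (m + 2), j ≠ 0 ∧
      (∀ θ₁ θ₂ : ℂ, Module.finrank ℂ
        ↥(Module.End.eigenspace (H 0) θ₁ ⊓ Module.End.eigenspace (H j) θ₂) ≤ 1) ∧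
      (¬ ∃ W₁ W₂ : Submodule ℂ (Fin 3 → ℂ), W₁ ≠ ⊥ ∧ W₂ ≠ ⊥ ∧ IsCompl W₁ W₂ ∧
        (InvariantPair (H 0) (Y 0) W₁ ∧ InvariantPair (H j) (Y j) W₁) ∧
        (InvariantPair (H 0) (Y 0) W₂ ∧ InvariantPair (H j) (Y j) W₂)) ∧
      (∀ i : Fin (m + 2), i ≠ 0 → i ≠ j → Y i = 0) ∧
      (∀ i : Fin (m + 2), i ≠ 0 → i ≠ j →
        ∃ c : ℂ, H i = c • (1 : Module.End ℂ (Fin 3 → ℂ))) := by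
  classical
  obtain ⟨b, w, hw⟩ := exists_eigenbasis H hHH hdiag
  set A : Fin (m + 2) → Fin 3 → Fin 3 → ℂ := fun i k l => b.repr (Y i (b l)) k with hAdef'
  have hAdef : ∀ i k l, A i k l = b.repr (Y i (b l)) k := fun i k l => rfl
  have hrepr : ∀ (i : Fin (m + 2)) (x : Fin 3 → ℂ) (k : Fin 3),
      b.repr (H i x) k = w k i * b.repr x k :=
    fun i x k => aux_reprH b (H i) (fun t => w t i) (fun t => hw t i) x k
  have hYb : ∀ i l, Y i (b l) = ∑ k, A i k l • b k := by
    intro i l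
    conv_lhs => rw [← b.sum_repr (Y i (b l))]
  have hshift : ∀ i k l, A i k l ≠ 0 → ∀ t, w k t = w l t - (if t = i then 1 else 0) := by
    intro i k l hA t
    have hy : H t (Y i (b l)) = (w l t - if t = i then 1 else 0) • Y i (b l) := by
      by_cases hti : t = i
      · subst hti
        have hc := LinearMap.ext_iff.mp (hrel t) (b l)
        simp only [LinearMap.sub_apply, Module.End.mul_apply, LinearMap.neg_apply] at hc
        rw [hw l t, map_smul] at hc
        rw [if_pos rfl, sub_smul, one_smul, sub_eq_iff_eq_add.mp hc]
        abel
      · have hc := LinearMap.ext_iff.mp (hHY t i hti) (b l)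
        simp only [Module.End.mul_apply] at hc
        rw [hw l t, map_smul] at hc
        rw [if_neg hti, sub_zero, hc]
    have h1 := congrArg (fun v => b.repr v k) hy
    simp only [map_smul, Finsupp.smul_apply, smul_eq_mul] at h1
    rw [hrepr t (Y i (b l)) k] at h1
    rw [← hAdef] at h1
    exact mul_right_cancel₀ hA h1
  have hY0 : ∀ i, (∀ k l, A i k l = 0) → Y i = 0 := by
    intro i h
    apply b.ext
    intro l
    rw [hYb i l]
    simp only [LinearMap.zero_apply]
    apply Finset.sum_eq_zero
    intro k _
    rw [h k l, zero_smul]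
  have hedge0 : ∃ k l, A 0 k l ≠ 0 := by
    by_contra h
    push_neg at h
    exact hY₁ (hY0 0 h)
  have hne : ∀ i k l, A i k l ≠ 0 → k ≠ l := by
    intro i k l h hkl
    subst hkl
    have h1 := hshift i k k h i
    rw [if_pos rfl] at h1
    exact one_ne_zero (α := ℂ) (by linear_combination h1)
  have hAdist : ∀ i k l, A i k l ≠ 0 → w k ≠ w l := by
    intro i k l h heq
    have h1 := hshift i k l h i
    rw [if_pos rfl, congrFun heq i] at h1
    exact one_ne_zero (α := ℂ) (by linear_combination h1)
  have hreprH : ∀ i l k, k ≠ l → b.repr (H i (b l)) k = 0 := by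
    intro i l k hk
    rw [hw l i, map_smul, b.repr_self]
    simp [Finsupp.single_apply, hk, Ne.symm hk]
  by_cases hinj : ∀ k l : Fin 3, w k = w l → k = l
  · -- multiplicity-free case
    by_cases hchain : ∃ i x y z, A i x y ≠ 0 ∧ A i y z ≠ 0
    · -- a chain forces the pair (H 0, Y 0) to be indecomposable, contradicting hdec₁
      exfalso
      obtain ⟨i, x, y, z, hxy, hyz⟩ := hchain
      have hxyne : x ≠ y := hne i x y hxy
      have hyzne : y ≠ z := hne i y z hyz
      have s1 := hshift i x y hxy
      have s2 := hshift i y z hyz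
      have hxzne : x ≠ z := by
        intro hxz
        have e1 := s1 i
        rw [if_pos rfl, hxz] at e1
        have e2 := s2 i
        rw [if_pos rfl] at e2
        have : (2 : ℂ) = 0 := by linear_combination e1 + e2
        norm_num at this
      have hcl : ∀ i' k l, A i' k l ≠ 0 → i' = i ∧ ((k = x ∧ l = y) ∨ (k = y ∧ l = z)) := by
        intro i' k l h
        have hklne := hne i' k l h
        have s3 := hshift i' k l h
        have e1 := s1 i
        rw [if_pos rfl] at e1
        have e2 := s2 i
        rw [if_pos rfl] at e2
        have e3 := s3 i
        rcases dec4 x y z hxyne hxzne hyzne k with hk | hk | hk <;>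
          rcases dec4 x y z hxyne hxzne hyzne l with hl | hl | hl
        · exact absurd (hk.trans hl.symm) hklne
        · -- (x, y)
          refine ⟨?_, Or.inl ⟨hk, hl⟩⟩
          by_contra hii
          rw [if_neg (fun hh => hii hh.symm), hk, hl] at e3
          exact one_ne_zero (α := ℂ) (by linear_combination e1 - e3)
        · -- (x, z)
          exfalso
          rw [hk, hl] at e3
          by_cases hii : i = i'
          · rw [if_pos hii] at e3
            exact one_ne_zero (α := ℂ) (by linear_combination e1 + e2 - e3)
          · rw [if_neg hii] at e3
            have : (2 : ℂ) = 0 := by linear_combination e1 + e2 - e3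
            norm_num at this
        · -- (y, x)
          exfalso
          rw [hk, hl] at e3
          by_cases hii : i = i'
          · rw [if_pos hii] at e3
            have : (2 : ℂ) = 0 := by linear_combination e1 + e3
            norm_num at this
          · rw [if_neg hii] at e3
            exact one_ne_zero (α := ℂ) (by linear_combination e1 + e3)
        · exact absurd (hk.trans hl.symm) hklne
        · -- (y, z)
          refine ⟨?_, Or.inr ⟨hk, hl⟩⟩
          by_contra hii
          rw [if_neg (fun hh => hii hh.symm), hk, hl] at e3
          exact one_ne_zero (α := ℂ) (by linear_combination e2 - e3)
        · -- (z, x)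
          exfalso
          rw [hk, hl] at e3
          by_cases hii : i = i'
          · rw [if_pos hii] at e3
            have : (3 : ℂ) = 0 := by linear_combination e1 + e2 + e3
            norm_num at this
          · rw [if_neg hii] at e3
            have : (2 : ℂ) = 0 := by linear_combination e1 + e2 + e3
            norm_num at this
        · -- (z, y)
          exfalso
          rw [hk, hl] at e3
          by_cases hii : i = i'
          · rw [if_pos hii] at e3
            have : (2 : ℂ) = 0 := by linear_combination e2 + e3
            norm_num at this
          · rw [if_neg hii] at e3
            exact one_ne_zero (α := ℂ) (by linear_combination e2 + e3)
        · exact absurd (hk.trans hl.symm) hklne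
      have hi0 : 0 = i := by
        obtain ⟨k₀, l₀, h0⟩ := hedge0
        exact (hcl 0 k₀ l₀ h0).1
      subst hi0
      obtain ⟨W₁, W₂, hb₁, hb₂, hcompl, hP₁, hP₂⟩ := hdec₁
      have e1 := s1 0
      rw [if_pos rfl] at e1
      have e2 := s2 0
      rw [if_pos rfl] at e2
      have hw0 : ∀ k l : Fin 3, k ≠ l → w k 0 ≠ w l 0 := by
        intro k l hkl
        rcases dec4 x y z hxyne hxzne hyzne k with hk | hk | hk <;>
          rcases dec4 x y z hxyne hxzne hyzne l with hl | hl | hl <;>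
            rw [hk, hl] <;> intro hEq
        · exact hkl (hk.trans hl.symm)
        · exact one_ne_zero (α := ℂ) (by linear_combination e1 - hEq)
        · have : (2 : ℂ) = 0 := by linear_combination e1 + e2 - hEq
          norm_num at this
        · exact one_ne_zero (α := ℂ) (by linear_combination e1 + hEq)
        · exact hkl (hk.trans hl.symm)
        · exact one_ne_zero (α := ℂ) (by linear_combination e2 - hEq)
        · have : (2 : ℂ) = 0 := by linear_combination e1 + e2 + hEq
          norm_num at this
        · exact one_ne_zero (α := ℂ) (by linear_combination e2 + hEq)
        · exact hkl (hk.trans hl.symm)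
      have comp₁ := aux_comp b W₁
        (fun k l hkl => ⟨H 0, hP₁.1, fun t => w t 0, fun t => hw t 0, hw0 k l hkl⟩)
      have comp₂ := aux_comp b W₂
        (fun k l hkl => ⟨H 0, hP₂.1, fun t => w t 0, fun t => hw t 0, hw0 k l hkl⟩)
      have part := aux_part b W₁ W₂ hcompl comp₁ comp₂
      have n1 := aux_nonbot b W₁ hb₁ comp₁
      have n2 := aux_nonbot b W₂ hb₂ comp₂
      have eA : ∀ W : Submodule ℂ (Fin 3 → ℂ), W = W₁ ∨ W = W₂ → b y ∈ W → b x ∈ W := by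
        intro W hWeq hby
        have hYw : Y 0 (b y) ∈ W := by
          rcases hWeq with rfl | rfl
          exacts [hP₁.2 _ hby, hP₂.2 _ hby]
        have compW : ∀ v ∈ W, ∀ k, b.repr v k ≠ 0 → b k ∈ W := by
          rcases hWeq with rfl | rfl
          exacts [comp₁, comp₂]
        exact compW _ hYw x (by rw [← hAdef]; exact hxy)
      have eB : ∀ W : Submodule ℂ (Fin 3 → ℂ), W = W₁ ∨ W = W₂ → b z ∈ W → b y ∈ W := by
        intro W hWeq hbz
        have hYw : Y 0 (b z) ∈ W := by
          rcases hWeq with rfl | rfl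
          exacts [hP₁.2 _ hbz, hP₂.2 _ hbz]
        have compW : ∀ v ∈ W, ∀ k, b.repr v k ≠ 0 → b k ∈ W := by
          rcases hWeq with rfl | rfl
          exacts [comp₁, comp₂]
        exact compW _ hYw y (by rw [← hAdef]; exact hyz)
      exact aux_conn b W₁ W₂ part (fun k h1 h2 => aux_notboth b W₁ W₂ hcompl k h1 h2) n1 n2
        x y y z
        (fun t => by
          rcases dec4 x y z hxyne hxzne hyzne t with h | h | h
          exacts [Or.inl h, Or.inr (Or.inl h), Or.inr (Or.inr (Or.inr h))])
        (Or.inr (Or.inr (Or.inl rfl))) eA eB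
    · -- no chain: each `Y i` has a unique nonzero entry; find the second index j
      have UNIQ : ∀ i k l k' l', A i k l ≠ 0 → A i k' l' ≠ 0 → k = k' ∧ l = l' := by
        intro i k l k' l' h h'
        have hkl := hne i k l h
        have hkl' := hne i k' l' h'
        by_cases hll : l = l'
        · subst hll
          refine ⟨hinj k k' ?_, rfl⟩
          funext t
          rw [hshift i k l h t, hshift i k' l h' t]
        · by_cases hkk : k = k'
          · exfalso
            subst hkk
            apply hll
            apply hinj
            funext t
            have e1 := hshift i k l h t
            have e2 := hshift i k l' h' t
            linear_combination e2 - e1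
          · by_cases hlk' : l = k'
            · refine absurd ⟨i, k, l, l', h, ?_⟩ hchain
              rw [hlk']
              exact h'
            · by_cases hkl'2 : k = l'
              · refine absurd ⟨i, k', k, l, ?_, h⟩ hchain
                rw [hkl'2]
                exact h'
              · exact absurd hll (fun hh => (dec3 k l k' l' hkl hkl' hkk hkl'2 hlk') hh)
      obtain ⟨k₀, l₀, h00⟩ := hedge0
      have hk₀l₀ := hne 0 k₀ l₀ h00
      obtain ⟨r, hrk, hrl, hcovr⟩ := dec5 k₀ l₀ hk₀l₀
      have hsecond : ∃ j kj lj, A j kj lj ≠ 0 ∧ (kj = r ∨ lj = r) := by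
        by_contra hno
        push_neg at hno
        apply hindec
        apply aux_decomp b H Y {r} r k₀ rfl (by simp [Ne.symm hrk])
        · intro i l k hl hk
          rw [Set.mem_singleton_iff] at hl
          subst hl
          refine ⟨hreprH i l k (by simpa using hk), ?_⟩
          rw [← hAdef]
          by_contra hA0
          exact (hno i k l hA0).2 rfl
        · intro i l k hl hk
          rw [Set.mem_singleton_iff] at hk
          subst hk
          refine ⟨hreprH i l k (fun hh => hl (by rw [← hh]; rfl)), ?_⟩
          rw [← hAdef]
          by_contra hA0
          exact (hno i k l hA0).1 rfl
      obtain ⟨j, kj, lj, hjj, hjr⟩ := hsecond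
      have hj0 : j ≠ 0 := by
        intro hj
        subst hj
        obtain ⟨hk, hl⟩ := UNIQ 0 kj lj k₀ l₀ hjj h00
        rcases hjr with h | h
        · exact hrk (by rw [← h, hk])
        · exact hrl (by rw [← h, hl])
      have hkjlj := hne j kj lj hjj
      have s0 := hshift 0 k₀ l₀ h00
      have sj := hshift j kj lj hjj
      have hnotsame : ¬(k₀ = kj ∧ l₀ = lj) := by
        rintro ⟨h1, h2⟩
        have e0 := s0 0
        rw [if_pos rfl] at e0
        have ej := sj 0
        rw [if_neg (fun hh => hj0 hh.symm), ← h1, ← h2] at ej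
        exact one_ne_zero (α := ℂ) (by linear_combination e0 - ej)
      have hnotswap : ¬(k₀ = lj ∧ l₀ = kj) := by
        rintro ⟨h1, h2⟩
        have e0 := s0 0
        rw [if_pos rfl] at e0
        have ej := sj 0
        rw [if_neg (fun hh => hj0 hh.symm), ← h2, ← h1] at ej
        exact one_ne_zero (α := ℂ) (by linear_combination e0 + ej)
      obtain ⟨hcov4, hcom4⟩ := dec1 k₀ l₀ kj lj hk₀l₀ hkjlj hnotsame hnotswap
      have hconst : ∀ i, i ≠ 0 → i ≠ j → ∀ t t', w t i = w t' i := by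
        intro i hi0 hij
        apply aux_const (fun t => w t i) k₀ l₀ kj lj hcov4 hcom4
        · have h' := s0 i
          rw [if_neg hi0] at h'
          linear_combination h'
        · have h' := sj i
          rw [if_neg hij] at h'
          linear_combination h'
      have hpairsep : ∀ t t', t ≠ t' → (w t 0 ≠ w t' 0 ∨ w t j ≠ w t' j) := by
        intro t t' htt
        by_contra hcon
        push_neg at hcon
        apply htt
        apply hinj
        funext i
        by_cases hi0 : i = 0
        · rw [hi0]; exact hcon.1
        · by_cases hij : i = j
          · rw [hij]; exact hcon.2
          · exact hconst i hi0 hij t t'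
      refine ⟨j, hj0, ?_, ?_, ?_, ?_⟩
      · -- multiplicity-free
        intro θ₁ θ₂
        have hcompE : ∀ x ∈ Module.End.eigenspace (H 0) θ₁ ⊓ Module.End.eigenspace (H j) θ₂,
            ∀ k, b.repr x k ≠ 0 → w k 0 = θ₁ ∧ w k j = θ₂ := by
          intro x hx k hk
          rw [Submodule.mem_inf] at hx
          have h0' : H 0 x = θ₁ • x := Module.End.mem_eigenspace_iff.mp hx.1
          have hj' : H j x = θ₂ • x := Module.End.mem_eigenspace_iff.mp hx.2
          constructor
          · have h' := congrArg (fun v => b.repr v k) h0'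
            simp only [map_smul, Finsupp.smul_apply, smul_eq_mul] at h'
            rw [hrepr 0 x k] at h'
            exact mul_right_cancel₀ hk h'
          · have h' := congrArg (fun v => b.repr v k) hj'
            simp only [map_smul, Finsupp.smul_apply, smul_eq_mul] at h'
            rw [hrepr j x k] at h'
            exact mul_right_cancel₀ hk h'
        by_cases hex : ∃ t, w t 0 = θ₁ ∧ w t j = θ₂
        · obtain ⟨t, ht⟩ := hex
          have hle : Module.End.eigenspace (H 0) θ₁ ⊓ Module.End.eigenspace (H j) θ₂
              ≤ ℂ ∙ b t := by
            intro x hx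
            have hx' := hcompE x hx
            rw [← b.sum_repr x]
            apply Submodule.sum_mem
            intro k _
            by_cases hkt : k = t
            · rw [hkt]
              exact Submodule.smul_mem _ _ (Submodule.mem_span_singleton_self _)
            · have hzero : b.repr x k = 0 := by
                by_contra hk0
                obtain ⟨ha, hb'⟩ := hx' k hk0
                rcases hpairsep k t hkt with hcase | hcase
                · exact hcase (by rw [ha, ht.1])
                · exact hcase (by rw [hb', ht.2])
              rw [hzero, zero_smul]
              exact Submodule.zero_mem _
          have hm := Submodule.finrank_mono (R := ℂ) (M := Fin 3 → ℂ) hle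
          have hs : Module.finrank ℂ ↥(ℂ ∙ b t) = 1 := finrank_span_singleton (b.ne_zero t)
          rw [hs] at hm
          exact hm
        · have hbot : Module.End.eigenspace (H 0) θ₁ ⊓ Module.End.eigenspace (H j) θ₂ = ⊥ := by
            rw [eq_bot_iff]
            intro x hx
            rw [Submodule.mem_bot]
            by_contra hx0
            have hex2 : ∃ k, b.repr x k ≠ 0 := by
              by_contra hall
              push_neg at hall
              exact hx0 (by simpa using congrArg b.repr.symm (Finsupp.ext hall : b.repr x = 0))
            obtain ⟨k, hk⟩ := hex2
            exact hex ⟨k, hcompE x hx k hk⟩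
          rw [hbot]
          simp
      · -- indecomposability of the pair (0, j)
        rintro ⟨W₁, W₂, hb₁, hb₂, hcompl, ⟨hI01, hIj1⟩, ⟨hI02, hIj2⟩⟩
        have mksep : ∀ W : Submodule ℂ (Fin 3 → ℂ), (∀ v ∈ W, H 0 v ∈ W) →
            (∀ v ∈ W, H j v ∈ W) →
            ∀ k l : Fin 3, k ≠ l → ∃ T : Module.End ℂ (Fin 3 → ℂ), (∀ v ∈ W, T v ∈ W) ∧
              ∃ d : Fin 3 → ℂ, (∀ t, T (b t) = d t • b t) ∧ d k ≠ d l := by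
          intro W hW0 hWj k l hkl
          rcases hpairsep k l hkl with hc | hc
          · exact ⟨H 0, hW0, fun t => w t 0, fun t => hw t 0, hc⟩
          · exact ⟨H j, hWj, fun t => w t j, fun t => hw t j, hc⟩
        have comp₁ := aux_comp b W₁ (mksep W₁ hI01.1 hIj1.1)
        have comp₂ := aux_comp b W₂ (mksep W₂ hI02.1 hIj2.1)
        have part := aux_part b W₁ W₂ hcompl comp₁ comp₂
        have n1 := aux_nonbot b W₁ hb₁ comp₁
        have n2 := aux_nonbot b W₂ hb₂ comp₂
        have eA : ∀ W : Submodule ℂ (Fin 3 → ℂ), W = W₁ ∨ W = W₂ → b l₀ ∈ W → b k₀ ∈ W := by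
          intro W hWeq hbl
          have hYw : Y 0 (b l₀) ∈ W := by
            rcases hWeq with rfl | rfl
            exacts [hI01.2 _ hbl, hI02.2 _ hbl]
          have compW : ∀ v ∈ W, ∀ k, b.repr v k ≠ 0 → b k ∈ W := by
            rcases hWeq with rfl | rfl
            exacts [comp₁, comp₂]
          exact compW _ hYw k₀ (by rw [← hAdef]; exact h00)
        have eB : ∀ W : Submodule ℂ (Fin 3 → ℂ), W = W₁ ∨ W = W₂ → b lj ∈ W → b kj ∈ W := by
          intro W hWeq hbl
          have hYw : Y j (b lj) ∈ W := by
            rcases hWeq with rfl | rfl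
            exacts [hIj1.2 _ hbl, hIj2.2 _ hbl]
          have compW : ∀ v ∈ W, ∀ k, b.repr v k ≠ 0 → b k ∈ W := by
            rcases hWeq with rfl | rfl
            exacts [comp₁, comp₂]
          exact compW _ hYw kj (by rw [← hAdef]; exact hjj)
        exact aux_conn b W₁ W₂ part (fun k h1 h2 => aux_notboth b W₁ W₂ hcompl k h1 h2) n1 n2
          k₀ l₀ kj lj hcov4 hcom4 eA eB
      · -- all other Y's vanish
        intro i hi0 hij
        apply hY0
        intro k l
        by_contra hA0
        have h1 := hshift i k l hA0 i
        rw [if_pos rfl] at h1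
        have h2 := hconst i hi0 hij k l
        exact one_ne_zero (α := ℂ) (by linear_combination h1 - h2)
      · -- all other H's are scalar
        intro i hi0 hij
        refine ⟨w k₀ i, ?_⟩
        apply b.ext
        intro t
        rw [hw t i, hconst i hi0 hij t k₀]
        simp
  · -- repeated weight: contradiction
    exfalso
    push_neg at hinj
    obtain ⟨p, q, hwpq, hpq⟩ := hinj
    obtain ⟨r, hrp, hrq, hcov⟩ := dec5 p q hpq
    by_cases hwr : w r = w p
    · have hall : ∀ t, w t = w p := by
        intro t
        rcases hcov t with h | h | h
        · rw [h]
        · rw [h, ← hwpq]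
        · rw [h, hwr]
      obtain ⟨k, l, hkl⟩ := hedge0
      exact hAdist 0 k l hkl (by rw [hall k, hall l])
    · have hAr : ∀ i k l, A i k l ≠ 0 →
          (k = r ∧ (l = p ∨ l = q)) ∨ (l = r ∧ (k = p ∨ k = q)) := by
        intro i k l h
        have hkl := hne i k l h
        have hwkl := hAdist i k l h
        rcases hcov k with hk | hk | hk <;> rcases hcov l with hl | hl | hl
        · exact absurd (hk.trans hl.symm) hkl
        · exact absurd (by rw [hk, hl, hwpq]) hwkl
        · exact Or.inr ⟨hl, Or.inl hk⟩
        · exact absurd (by rw [hk, hl, ← hwpq]) hwkl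
        · exact absurd (hk.trans hl.symm) hkl
        · exact Or.inr ⟨hl, Or.inr hk⟩
        · exact Or.inl ⟨hk, Or.inl hl⟩
        · exact Or.inl ⟨hk, Or.inr hl⟩
        · exact absurd (hk.trans hl.symm) hkl
      obtain ⟨k₀, l₀, h00⟩ := hedge0
      rcases hAr 0 k₀ l₀ h00 with ⟨hk0, hl0⟩ | ⟨hl0, hk0⟩
      · -- case I : k₀ = r, l₀ ∈ {p, q}
        rw [hk0] at h00
        have hs0 : ∀ t, w r t = w p t - (if t = 0 then 1 else 0) := by
          intro t
          have h1 := hshift 0 r l₀ h00 t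
          rcases hl0 with h | h
          · rwa [h] at h1
          · rw [h] at h1
            rwa [show w q t = w p t from (congrFun hwpq t).symm] at h1
        have honly : ∀ i k l, A i k l ≠ 0 → (i = 0 ∧ k = r ∧ (l = p ∨ l = q)) := by
          intro i k l h
          rcases hAr i k l h with ⟨hk, hl⟩ | ⟨hl, hk⟩
          · have h1 := hshift i k l h i
            rw [if_pos rfl] at h1
            have h2 : w l i = w p i := by
              rcases hl with h' | h'
              · rw [h']
              · rw [h']; exact (congrFun hwpq i).symm
            have h3 := hs0 i
            rw [← hk] at h3
            by_cases hi : i = 0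
            · exact ⟨hi, hk, hl⟩
            · exfalso
              rw [if_neg hi] at h3
              exact one_ne_zero (α := ℂ) (by linear_combination h1 + h2 - h3)
          · exfalso
            have h1 := hshift i k l h i
            rw [if_pos rfl, hl] at h1
            have h2 : w k i = w p i := by
              rcases hk with h' | h'
              · rw [h']
              · rw [h']; exact (congrFun hwpq i).symm
            have h3 := hs0 i
            by_cases hi : i = 0
            · rw [if_pos hi] at h3
              have : (2 : ℂ) = 0 := by linear_combination h1 - h2 + h3
              norm_num at this
            · rw [if_neg hi] at h3
              exact one_ne_zero (α := ℂ) (by linear_combination h1 - h2 + h3)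
        exact hindec (caseI H Y b w A hAdef hw p q r hpq (Ne.symm hrp) (Ne.symm hrq)
          (fun i => congrFun hwpq i) 0 honly)
      · -- case II : l₀ = r, k₀ ∈ {p, q}
        rw [hl0] at h00
        have hs0 : ∀ t, w p t = w r t - (if t = 0 then 1 else 0) := by
          intro t
          have h1 := hshift 0 k₀ r h00 t
          rcases hk0 with h | h
          · rwa [h] at h1
          · rw [h] at h1
            rwa [show w q t = w p t from (congrFun hwpq t).symm] at h1
        have honly : ∀ i k l, A i k l ≠ 0 → (i = 0 ∧ l = r ∧ (k = p ∨ k = q)) := by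
          intro i k l h
          rcases hAr i k l h with ⟨hk, hl⟩ | ⟨hl, hk⟩
          · exfalso
            have h1 := hshift i k l h i
            rw [if_pos rfl, hk] at h1
            have h2 : w l i = w p i := by
              rcases hl with h' | h'
              · rw [h']
              · rw [h']; exact (congrFun hwpq i).symm
            have h3 := hs0 i
            by_cases hi : i = 0
            · rw [if_pos hi] at h3
              have : (2 : ℂ) = 0 := by linear_combination h1 + h2 + h3
              norm_num at this
            · rw [if_neg hi] at h3
              exact one_ne_zero (α := ℂ) (by linear_combination h1 + h2 + h3)
          · have h1 := hshift i k l h i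
            rw [if_pos rfl, hl] at h1
            have h2 : w k i = w p i := by
              rcases hk with h' | h'
              · rw [h']
              · rw [h']; exact (congrFun hwpq i).symm
            have h3 := hs0 i
            by_cases hi : i = 0
            · exact ⟨hi, hl, hk⟩
            · exfalso
              rw [if_neg hi] at h3
              exact one_ne_zero (α := ℂ) (by linear_combination h1 - h2 - h3)
        rcases hk0 with hkp | hkq
        · exact hindec (caseII H Y b w A hAdef hw p q r hpq (Ne.symm hrp) (Ne.symm hrq)
            (fun i => congrFun hwpq i) 0 honly (by rw [← hkp]; exact h00))
        · refine hindec (caseII H Y b w A hAdef hw q p r (Ne.symm hpq) (Ne.symm hrq)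
            (Ne.symm hrp) (fun i => (congrFun hwpq i).symm) 0 ?_ (by rw [← hkq]; exact h00))
          intro i k l h
          obtain ⟨h1, h2, h3⟩ := honly i k l h
          exact ⟨h1, h2, h3.symm⟩
end

section
/- Let n ≥ 1 and let H₁,…,Hₙ, Y₁,…,Yₙ be an indecomposable representation of 𝔟ⁿ on ℂ³ with each H_i diagonalizable. Then there exist a permutation σ of {1,…,n} and an invertible S ∈ GL(3,ℂ) such that, setting H'_i := S⁻¹H_{σ(i)}S and Y'_i := S⁻¹Y_{σ(i)}S, one of the following holds: (i) the pair (H'₁, Y'₁) is an indecomposable representation of 𝔟 on ℂ³, and for every i ≥ 2 there is λ_i ∈ ℂ with H'_i = λ_i·I₃ and Y'_i = 0; (ii) H'₁ = diag(λ₁, λ₁−1, λ₁), Y'₁ = E₂₁, H'₂ = diag(λ₂, λ₂, λ₂−1), Y'₂ = E₃₁, and for every i ≥ 3 there is λ_i ∈ ℂ with H'_i = λ_i·I₃ and Y'_i = 0, for some scalars λ₁, λ₂; (iii) H'₁ = diag(α₁−1, α₁, α₁−1), Y'₁ = E₃₂, H'₂ = diag(α₂, α₂−1, α₂−1), Y'₂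 = E₃₁, and for every i ≥ 3 there is α_i ∈ ℂ with H'_i = α_i·I₃ and Y'_i = 0, for some scalars α₁, α₂. Here E_{pq} denotes the 3×3 matrix unit with 1 in position (p,q) and 0 elsewhere. -/
open Matrix
/-- A subspace of `ℂ³` invariant under (multiplication by) both matrices `T` and `S`. -/
def MatInvariantPair (T S : Matrix (Fin 3) (Fin 3) ℂ)
    (W : Submodule ℂ (Fin 3 → ℂ)) : Prop :=
  (∀ x ∈ W, T.mulVec x ∈ W) ∧ (∀ x ∈ W, S.mulVec x ∈ W)

/-- Indecomposability of a single pair `(T, S)` acting on `ℂ³`. -/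
def MatPairIndec (T S : Matrix (Fin 3) (Fin 3) ℂ) : Prop :=
  ¬ ∃ W₁ W₂ : Submodule ℂ (Fin 3 → ℂ), W₁ ≠ ⊥ ∧ W₂ ≠ ⊥ ∧ IsCompl W₁ W₂ ∧
    MatInvariantPair T S W₁ ∧ MatInvariantPair T S W₂


lemma colspan_top {P : Matrix (Fin 3) (Fin 3) ℂ} (hP : IsUnit P) (x : Fin 3 → ℂ) :
    x = ∑ k : Fin 3, (P⁻¹ *ᵥ x) k • (fun p => P p k) := by
  have h1 : P * P⁻¹ = 1 := mul_nonsing_inv P ((isUnit_iff_isUnit_det P).mp hP)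
  funext p
  have : x p = (P *ᵥ (P⁻¹ *ᵥ x)) p := by rw [mulVec_mulVec, h1, one_mulVec]
  rw [this]
  simp [mulVec, dotProduct, Finset.sum_apply]
  exact Finset.sum_congr rfl fun k _ => mul_comm _ _

lemma myConjPow {P Pi N : Matrix (Fin 3) (Fin 3) ℂ} (h1 : Pi * P = 1) (k : ℕ) :
    (P * N * Pi) ^ k = P * N ^ k * Pi := by
  induction k with
  | zero =>
    have h1' : P * Pi = 1 := mul_eq_one_comm.mp h1
    simp only [pow_zero, Matrix.mul_one, h1']
  | succ m ih =>
    rw [pow_succ, pow_succ, ih]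
    simp only [Matrix.mul_assoc]
    rw [← Matrix.mul_assoc Pi P, h1, Matrix.one_mul]

lemma toLin'_sub_pow {Hi : Matrix (Fin 3) (Fin 3) ℂ} (μ : ℂ) (j : ℕ) (y : Fin 3 → ℂ) :
    ((Matrix.toLin' Hi - μ • 1) ^ j) y = ((Hi - μ • (1 : Matrix (Fin 3) (Fin 3) ℂ)) ^ j) *ᵥ y := by
  induction j generalizing y with
  | zero => simp
  | succ m ih =>
    have key : ∀ z, (Matrix.toLin' Hi - μ • 1) z = (Hi - μ • 1) *ᵥ z := by
      intro z
      simp [Matrix.sub_mulVec, Matrix.toLin'_apply, smul_mulVec, Matrix.one_mulVec]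
    rw [pow_succ', pow_succ', Module.End.mul_apply, ih, key, mulVec_mulVec]

lemma sd_claimEq {Hi : Matrix (Fin 3) (Fin 3) ℂ} {P : Matrix (Fin 3) (Fin 3) ℂ}
    (hP : IsUnit P) {d : Fin 3 → ℂ} (hH : Hi = P * Matrix.diagonal d * P⁻¹)
    (μ : ℂ) (x : Fin 3 → ℂ)
    (hx : x ∈ Module.End.maxGenEigenspace (Matrix.toLin' Hi) μ) :
    Matrix.toLin' Hi x = μ • x := by
  have hdet := (isUnit_iff_isUnit_det P).mp hP
  have h1 : P * P⁻¹ = 1 := mul_nonsing_inv P hdet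
  have h2 : P⁻¹ * P = 1 := nonsing_inv_mul P hdet
  rw [Module.End.mem_maxGenEigenspace] at hx
  obtain ⟨k, hk⟩ := hx
  rw [toLin'_sub_pow] at hk
  have hsub : Hi - μ • 1 = P * Matrix.diagonal (fun p => d p - μ) * P⁻¹ := by
    have : (μ • 1 : Matrix (Fin 3) (Fin 3) ℂ) = P * Matrix.diagonal (fun _ => μ) * P⁻¹ := by
      rw [← Matrix.smul_one_eq_diagonal, Matrix.mul_smul, Matrix.smul_mul, mul_one, h1]
    rw [hH, this, ← Matrix.sub_mul, ← Matrix.mul_sub, Matrix.diagonal_sub]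
  have hpowm : (Hi - μ • 1) ^ k = P * Matrix.diagonal (fun p => (d p - μ) ^ k) * P⁻¹ := by
    rw [hsub, myConjPow h2, Matrix.diagonal_pow]
    rfl
  rw [hpowm] at hk
  have hy : Matrix.diagonal (fun p => d p - μ) *ᵥ (P⁻¹ *ᵥ x) = 0 := by
    have hk2 : Matrix.diagonal (fun p => (d p - μ) ^ k) *ᵥ (P⁻¹ *ᵥ x) = 0 := by
      have h3 := congrArg (fun z => P⁻¹ *ᵥ z) hk
      simp only [mulVec_mulVec, Matrix.mulVec_zero] at h3
      rw [mulVec_mulVec]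
      rw [show P⁻¹ * ((P * Matrix.diagonal fun p => (d p - μ) ^ k) * P⁻¹)
            = (Matrix.diagonal fun p => (d p - μ) ^ k) * P⁻¹ by
        rw [← Matrix.mul_assoc, ← Matrix.mul_assoc, h2, Matrix.one_mul]] at h3
      exact h3
    funext p
    have hp := congrFun hk2 p
    simp only [mulVec_diagonal, Pi.zero_apply] at hp ⊢
    rcases mul_eq_zero.mp hp with h | h
    · rw [pow_eq_zero_iff'] at h
      rw [h.1, zero_mul]
    · rw [h, mul_zero]
  have hfin : (Hi - μ • 1) *ᵥ x = 0 := by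
    rw [hsub]
    have h3 := congrArg (fun z => P *ᵥ z) hy
    simp only [mulVec_mulVec, Matrix.mulVec_zero] at h3
    rw [Matrix.mul_assoc]
    exact h3
  rw [show Matrix.toLin' Hi x = Hi *ᵥ x from Matrix.toLin'_apply _ _]
  funext p
  have hp := congrFun hfin p
  simp [Matrix.sub_mulVec, smul_mulVec, Matrix.one_mulVec, sub_eq_zero] at hp
  simpa using hp

lemma simDiag {n : ℕ} (H : Fin n → Matrix (Fin 3) (Fin 3) ℂ)
    (hHH : ∀ i j, Commute (H i) (H j))
    (hdiag : ∀ i, ∃ P : Matrix (Fin 3) (Fin 3) ℂ, IsUnit P ∧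
      ∃ d : Fin 3 → ℂ, H i = P * Matrix.diagonal d * P⁻¹) :
    ∃ P : Matrix (Fin 3) (Fin 3) ℂ, IsUnit P ∧ ∀ i, ∃ d : Fin 3 → ℂ,
      H i * P = P * Matrix.diagonal d := by
  classical
  set f : Fin n → Module.End ℂ (Fin 3 → ℂ) := fun i => Matrix.toLin' (H i) with hf
  have hcomm : Pairwise fun i j => Commute (f i) (f j) := by
    intro i j _
    have := hHH i j
    simp only [Commute, SemiconjBy] at this ⊢
    rw [hf]
    refine LinearMap.ext fun x => ?_
    simp only [Module.End.mul_apply, Matrix.toLin'_apply, mulVec_mulVec, this]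
  -- each f i has maxGenEigenspaces spanning
  have htop1 : ∀ i, ⨆ μ, (f i).maxGenEigenspace μ = ⊤ := by
    intro i
    obtain ⟨P, hP, d, hH⟩ := hdiag i
    rw [eq_top_iff]
    intro x _
    rw [colspan_top hP x]
    apply Submodule.sum_mem
    intro k _
    apply Submodule.smul_mem
    apply Submodule.mem_iSup_of_mem (d k)
    rw [Module.End.mem_maxGenEigenspace]
    refine ⟨1, ?_⟩
    have hdet := (isUnit_iff_isUnit_det P).mp hP
    have h2 : P⁻¹ * P = 1 := nonsing_inv_mul P hdet
    have hHP : H i * P = P * Matrix.diagonal d := by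
      rw [hH, Matrix.mul_assoc, h2, Matrix.mul_one]
    simp only [pow_one, LinearMap.sub_apply, LinearMap.smul_apply, Module.End.one_apply, hf]
    rw [Matrix.toLin'_apply]
    funext p
    have : (H i *ᵥ fun q => P q k) p = (H i * P) p k := by
      simp [Matrix.mulVec, Matrix.mul_apply, dotProduct]
    simp only [Pi.sub_apply, Pi.smul_apply, Pi.zero_apply, smul_eq_mul]
    rw [this, hHP, Matrix.mul_diagonal]
    ring
  have htop := Module.End.iSup_iInf_maxGenEigenspace_eq_top_of_iSup_maxGenEigenspace_eq_top_of_commute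
    f hcomm htop1
  have hind : iSupIndep fun χ : Fin n → ℂ => ⨅ i, (f i).maxGenEigenspace (χ i) := by
    apply Module.End.independent_iInf_maxGenEigenspace_of_forall_mapsTo
    intro i j φ
    apply Module.End.mapsTo_maxGenEigenspace_of_comm
    rcases eq_or_ne j i with rfl | hij
    · exact Commute.refl _
    · exact hcomm hij
  have hinternal := DirectSum.isInternal_submodule_of_iSupIndep_of_iSup_eq_top hind htop
  -- collected basis
  let bases : ∀ χ : Fin n → ℂ,
      Module.Basis (Module.Basis.ofVectorSpaceIndex ℂ ↥(⨅ i, (f i).maxGenEigenspace (χ i))) ℂ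
        ↥(⨅ i, (f i).maxGenEigenspace (χ i)) :=
    fun χ => Module.Basis.ofVectorSpace ℂ _
  let b := hinternal.collectedBasis bases
  let e := b.indexEquiv (Pi.basisFun ℂ (Fin 3))
  let v : Fin 3 → (Fin 3 → ℂ) := fun k => b (e.symm k)
  let dd : Fin 3 → (Fin n → ℂ) := fun k => (e.symm k).1
  have hv : ∀ i k, f i (v k) = dd k i • v k := by
    intro i k
    obtain ⟨Pi, hPi, d, hHi⟩ := hdiag i
    apply sd_claimEq hPi hHi
    have hmem := hinternal.collectedBasis_mem bases (e.symm k)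
    exact (Submodule.mem_iInf _).mp hmem i
  -- build P
  let vb := b.reindex e
  let P : Matrix (Fin 3) (Fin 3) ℂ := (Pi.basisFun ℂ (Fin 3)).toMatrix vb
  have hPv : ∀ p k, P p k = v k p := by
    intro p k
    simp [P, Module.Basis.toMatrix_apply, Pi.basisFun_repr, vb, v]
  have hPunit : IsUnit P := by
    have := Module.Basis.invertibleToMatrix (Pi.basisFun ℂ (Fin 3)) vb
    exact isUnit_of_invertible P
  refine ⟨P, hPunit, fun i => ⟨fun k => dd k i, ?_⟩⟩
  ext p k
  rw [Matrix.mul_diagonal]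
  have : (H i * P) p k = (H i *ᵥ v k) p := by
    simp [Matrix.mul_apply, Matrix.mulVec, dotProduct, hPv]
  rw [this]
  have := congrFun (hv i k) p
  rw [hf] at this
  simp only [Matrix.toLin'_apply] at this
  rw [this, hPv]
  simp [mul_comm]
noncomputable def unitEquiv (P : Matrix (Fin 3) (Fin 3) ℂ) (hP : IsUnit P) :
    (Fin 3 → ℂ) ≃ₗ[ℂ] (Fin 3 → ℂ) := by
  have hdet := (isUnit_iff_isUnit_det P).mp hP
  exact LinearEquiv.ofLinear (Matrix.toLin' P) (Matrix.toLin' P⁻¹)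
    (by rw [← Matrix.toLin'_mul, mul_nonsing_inv P hdet, Matrix.toLin'_one])
    (by rw [← Matrix.toLin'_mul, nonsing_inv_mul P hdet, Matrix.toLin'_one])

lemma unitEquiv_apply (P : Matrix (Fin 3) (Fin 3) ℂ) (hP : IsUnit P) (x : Fin 3 → ℂ) :
    unitEquiv P hP x = P *ᵥ x := by
  simp [unitEquiv, Matrix.toLin'_apply]

lemma dec_transfer {n : ℕ} (H Y : Fin n → Matrix (Fin 3) (Fin 3) ℂ)
    (P : Matrix (Fin 3) (Fin 3) ℂ) (hP : IsUnit P)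
    (hindec : ¬ ∃ W₁ W₂ : Submodule ℂ (Fin 3 → ℂ), W₁ ≠ ⊥ ∧ W₂ ≠ ⊥ ∧ IsCompl W₁ W₂ ∧
      (∀ i, MatInvariantPair (H i) (Y i) W₁) ∧ (∀ i, MatInvariantPair (H i) (Y i) W₂)) :
    ¬ ∃ W₁ W₂ : Submodule ℂ (Fin 3 → ℂ), W₁ ≠ ⊥ ∧ W₂ ≠ ⊥ ∧ IsCompl W₁ W₂ ∧
      (∀ i, MatInvariantPair (P⁻¹ * H i * P) (P⁻¹ * Y i * P) W₁) ∧
      (∀ i, MatInvariantPair (P⁻¹ * H i * P) (P⁻¹ * Y i * P) W₂) := by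
  have hdet := (isUnit_iff_isUnit_det P).mp hP
  have h1 : P * P⁻¹ = 1 := mul_nonsing_inv P hdet
  rintro ⟨W₁, W₂, hb1, hb2, hc, hi1, hi2⟩
  set e := unitEquiv P hP
  have hmapinv : ∀ (M : Matrix (Fin 3) (Fin 3) ℂ) (W : Submodule ℂ (Fin 3 → ℂ)),
      (∀ x ∈ W, (P⁻¹ * M * P) *ᵥ x ∈ W) → ∀ y ∈ W.map (e : (Fin 3 → ℂ) →ₗ[ℂ] (Fin 3 → ℂ)),
        M *ᵥ y ∈ W.map (e : (Fin 3 → ℂ) →ₗ[ℂ] (Fin 3 → ℂ)) := by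
    intro M W hW y hy
    obtain ⟨x, hx, rfl⟩ := Submodule.mem_map.mp hy
    refine Submodule.mem_map.mpr ⟨(P⁻¹ * M * P) *ᵥ x, hW x hx, ?_⟩
    simp only [LinearEquiv.coe_coe, unitEquiv_apply, e]
    rw [mulVec_mulVec, mulVec_mulVec, ← Matrix.mul_assoc, ← Matrix.mul_assoc, h1,
      Matrix.one_mul]
  apply hindec
  have hbot : ∀ W : Submodule ℂ (Fin 3 → ℂ),
      W.map (e : (Fin 3 → ℂ) →ₗ[ℂ] (Fin 3 → ℂ)) = ⊥ → W = ⊥ := by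
    intro W h
    rw [Submodule.eq_bot_iff] at h ⊢
    intro x hx
    have := h (e x) (Submodule.mem_map_of_mem hx)
    simpa using this
  refine ⟨W₁.map (e : (Fin 3 → ℂ) →ₗ[ℂ] (Fin 3 → ℂ)),
    W₂.map (e : (Fin 3 → ℂ) →ₗ[ℂ] (Fin 3 → ℂ)), fun h => hb1 (hbot _ h),
    fun h => hb2 (hbot _ h), ?_, ?_, ?_⟩
  · have := (Submodule.orderIsoMapComap e).isCompl hc
    simpa [Submodule.orderIsoMapComap] using this
  · exact fun i => ⟨hmapinv (H i) W₁ (hi1 i).1, hmapinv (Y i) W₁ (hi1 i).2⟩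
  · exact fun i => ⟨hmapinv (H i) W₂ (hi2 i).1, hmapinv (Y i) W₂ (hi2 i).2⟩

noncomputable def coordW (s : Set (Fin 3)) : Submodule ℂ (Fin 3 → ℂ) where
  carrier := {x | ∀ p, p ∉ s → x p = 0}
  add_mem' := by intro a b ha hb p hp; simp [ha p hp, hb p hp]
  zero_mem' := by intro p _; rfl
  smul_mem' := by intro c x hx p hp; simp [hx p hp]

lemma dec_split {n : ℕ} (A B : Fin n → Matrix (Fin 3) (Fin 3) ℂ)
    (s : Set (Fin 3)) [DecidablePred (· ∈ s)] (p₀ p₁ : Fin 3) (hp₀ : p₀ ∈ s) (hp₁ : p₁ ∉ s)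
    (hcross : ∀ i p q, (p ∈ s ↔ q ∉ s) → A i p q = 0 ∧ B i p q = 0) :
    ∃ W₁ W₂ : Submodule ℂ (Fin 3 → ℂ), W₁ ≠ ⊥ ∧ W₂ ≠ ⊥ ∧ IsCompl W₁ W₂ ∧
      (∀ i, MatInvariantPair (A i) (B i) W₁) ∧ (∀ i, MatInvariantPair (A i) (B i) W₂) := by
  refine ⟨coordW s, coordW sᶜ, ?_, ?_, ?_, ?_, ?_⟩
  · rw [Submodule.ne_bot_iff]
    refine ⟨Pi.single p₀ 1, fun q hq => Pi.single_eq_of_ne (fun h => hq (by rw [h]; exact hp₀)) 1, ?_⟩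
    intro h
    simpa using congrFun h p₀
  · rw [Submodule.ne_bot_iff]
    refine ⟨Pi.single p₁ 1, fun q hq => Pi.single_eq_of_ne
      (fun h => hq (by simp only [Set.mem_compl_iff]; rw [h]; exact hp₁)) 1, ?_⟩
    intro h
    simpa using congrFun h p₁
  · constructor
    · rw [disjoint_iff_inf_le]
      intro x ⟨hx1, hx2⟩
      have : x = 0 := by
        funext p
        by_cases hp : p ∈ s
        · exact hx2 p (by simpa using hp)
        · exact hx1 p hp
      simp [this]
    · rw [codisjoint_iff_le_sup]
      intro x _
      refine Submodule.mem_sup.mpr ⟨(fun p => if p ∈ s then x p else 0), ?_,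
        (fun p => if p ∈ s then 0 else x p), ?_, ?_⟩
      · intro p hp; simp [hp]
      · intro p hp; simp at hp; simp [hp]
      · funext p; by_cases hp : p ∈ s <;> simp [hp]
  · intro i
    have key : ∀ M : Matrix (Fin 3) (Fin 3) ℂ, (∀ p q, p ∉ s → q ∈ s → M p q = 0) →
        ∀ x ∈ coordW s, M *ᵥ x ∈ coordW s := by
      intro M hM x hx p hp
      rw [Matrix.mulVec, dotProduct]
      apply Finset.sum_eq_zero
      intro q _
      by_cases hq : q ∈ s
      · exact mul_eq_zero_of_left (hM p q hp hq) _
      · exact mul_eq_zero_of_right _ (hx q hq)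
    exact ⟨key (A i) (fun p q hp hq => (hcross i p q (iff_of_false hp (not_not_intro hq))).1) ,
      key (B i) (fun p q hp hq => (hcross i p q (iff_of_false hp (not_not_intro hq))).2)⟩
  · intro i
    have key : ∀ M : Matrix (Fin 3) (Fin 3) ℂ, (∀ p q, p ∈ s → q ∉ s → M p q = 0) →
        ∀ x ∈ coordW sᶜ, M *ᵥ x ∈ coordW sᶜ := by
      intro M hM x hx p hp
      rw [Set.notMem_compl_iff] at hp
      rw [Matrix.mulVec, dotProduct]
      apply Finset.sum_eq_zero
      intro q _
      by_cases hq : q ∈ s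
      · exact mul_eq_zero_of_right _ (hx q (Set.notMem_compl_iff.mpr hq))
      · exact mul_eq_zero_of_left (hM p q hp hq) _
    exact ⟨key (A i) (fun p q hp hq => (hcross i p q (iff_of_true hp hq)).1),
      key (B i) (fun p q hp hq => (hcross i p q (iff_of_true hp hq)).2)⟩

lemma mono_conj (v : Fin 3 → Fin 3) (hv : Function.Injective v)
    (s : Fin 3 → ℂ) (hs : ∀ k, s k ≠ 0) :
    ∃ Q : Matrix (Fin 3) (Fin 3) ℂ, IsUnit Q ∧
      (∀ M : Matrix (Fin 3) (Fin 3) ℂ,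
        Q⁻¹ * M * Q = Matrix.of (fun r q => (s r)⁻¹ * M (v r) (v q) * s q)) ∧
      (∀ e : Fin 3 → ℂ,
        Q⁻¹ * Matrix.diagonal e * Q = Matrix.diagonal (fun r => e (v r))) := by
  classical
  set Q : Matrix (Fin 3) (Fin 3) ℂ := Matrix.of (fun p k => if p = v k then s k else 0) with hQ
  set R : Matrix (Fin 3) (Fin 3) ℂ := Matrix.of (fun r p => if p = v r then (s r)⁻¹ else 0) with hR
  have hRQ : R * Q = 1 := by
    ext r k
    rw [Matrix.mul_apply]
    simp only [hR, hQ, Matrix.of_apply, ite_mul, zero_mul, mul_ite, mul_zero]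
    rw [Finset.sum_ite_eq' Finset.univ (v k) (fun p => if p = v r then (s r)⁻¹ * s k else 0)]
    simp only [Finset.mem_univ, if_true]
    by_cases h : r = k
    · subst h
      simp [inv_mul_cancel₀ (hs r), Matrix.one_apply]
    · rw [if_neg (fun hh => h (hv hh).symm), Matrix.one_apply_ne h]
  have hQu : IsUnit Q := (isUnit_iff_isUnit_det Q).mpr (Matrix.isUnit_det_of_left_inverse hRQ)
  have hQinv : Q⁻¹ = R := Matrix.inv_eq_left_inv hRQ
  have hconj : ∀ M : Matrix (Fin 3) (Fin 3) ℂ,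
      Q⁻¹ * M * Q = Matrix.of (fun r q => (s r)⁻¹ * M (v r) (v q) * s q) := by
    intro M
    rw [hQinv]
    ext r q
    rw [Matrix.mul_apply, Matrix.of_apply]
    have hRM : ∀ m, (R * M) r m = (s r)⁻¹ * M (v r) m := by
      intro m
      rw [Matrix.mul_apply]
      simp only [hR, Matrix.of_apply, ite_mul, zero_mul]
      rw [Finset.sum_ite_eq' Finset.univ (v r) (fun p => (s r)⁻¹ * M p m)]
      simp
    simp only [hRM, hQ, Matrix.of_apply, mul_ite, mul_zero]
    rw [Finset.sum_ite_eq' Finset.univ (v q) (fun m => (s r)⁻¹ * M (v r) m * s q)]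
    simp
  refine ⟨Q, hQu, hconj, fun e => ?_⟩
  rw [hconj]
  ext r q
  by_cases hrq : r = q
  · subst hrq
    rw [Matrix.of_apply, Matrix.diagonal_apply_eq, Matrix.diagonal_apply_eq,
      mul_comm ((s r)⁻¹) (e (v r)), mul_assoc, inv_mul_cancel₀ (hs r), mul_one]
  · rw [Matrix.of_apply, Matrix.diagonal_apply_ne _ (fun h => hrq (hv h)),
      Matrix.diagonal_apply_ne _ hrq, mul_zero, zero_mul]

lemma fin3_cover : ∀ (a b c p : Fin 3), a ≠ b → a ≠ c → b ≠ c → p = a ∨ p = b ∨ p = c := by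
  decide

lemma conj_smul_one {Q : Matrix (Fin 3) (Fin 3) ℂ} (hQ : IsUnit Q) (c : ℂ) :
    Q⁻¹ * (c • (1 : Matrix (Fin 3) (Fin 3) ℂ)) * Q = c • 1 := by
  have h2 : Q⁻¹ * Q = 1 := nonsing_inv_mul Q ((isUnit_iff_isUnit_det Q).mp hQ)
  rw [Matrix.mul_smul, Matrix.mul_one, Matrix.smul_mul, h2]
lemma inj3 : ∀ (a b c : Fin 3), a ≠ b → a ≠ c → b ≠ c →
    ∀ x y : Fin 3, (![a, b, c] : Fin 3 → Fin 3) x = ![a, b, c] y → x = y := by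
  decide

abbrev Concl {n : ℕ} (H Y : Fin n → Matrix (Fin 3) (Fin 3) ℂ) : Prop :=
    (∃ i₀ : Fin n, ∃ S : Matrix (Fin 3) (Fin 3) ℂ, IsUnit S ∧
      MatPairIndec (S⁻¹ * H i₀ * S) (S⁻¹ * Y i₀ * S) ∧
      ∀ i : Fin n, i ≠ i₀ → ∃ c : ℂ,
        S⁻¹ * H i * S = c • (1 : Matrix (Fin 3) (Fin 3) ℂ) ∧ S⁻¹ * Y i * S = 0) ∨
    (∃ i₁ i₂ : Fin n, i₁ ≠ i₂ ∧ ∃ S : Matrix (Fin 3) (Fin 3) ℂ, IsUnit S ∧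
      ∃ lam₁ lam₂ : ℂ,
        S⁻¹ * H i₁ * S = Matrix.diagonal ![lam₁, lam₁ - 1, lam₁] ∧
        S⁻¹ * Y i₁ * S = Matrix.single 1 0 (1 : ℂ) ∧
        S⁻¹ * H i₂ * S = Matrix.diagonal ![lam₂, lam₂, lam₂ - 1] ∧
        S⁻¹ * Y i₂ * S = Matrix.single 2 0 (1 : ℂ) ∧
        ∀ i : Fin n, i ≠ i₁ → i ≠ i₂ → ∃ c : ℂ,
          S⁻¹ * H i * S = c • (1 : Matrix (Fin 3) (Fin 3) ℂ) ∧ S⁻¹ * Y i * S = 0) ∨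
    (∃ i₁ i₂ : Fin n, i₁ ≠ i₂ ∧ ∃ S : Matrix (Fin 3) (Fin 3) ℂ, IsUnit S ∧
      ∃ a₁ a₂ : ℂ,
        S⁻¹ * H i₁ * S = Matrix.diagonal ![a₁ - 1, a₁, a₁ - 1] ∧
        S⁻¹ * Y i₁ * S = Matrix.single 2 1 (1 : ℂ) ∧
        S⁻¹ * H i₂ * S = Matrix.diagonal ![a₂, a₂ - 1, a₂ - 1] ∧
        S⁻¹ * Y i₂ * S = Matrix.single 2 0 (1 : ℂ) ∧
        ∀ i : Fin n, i ≠ i₁ → i ≠ i₂ → ∃ c : ℂ,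
          S⁻¹ * H i * S = c • (1 : Matrix (Fin 3) (Fin 3) ℂ) ∧ S⁻¹ * Y i * S = 0)

lemma caseL1 {n : ℕ} (H Y : Fin n → Matrix (Fin 3) (Fin 3) ℂ)
    (P : Matrix (Fin 3) (Fin 3) ℂ) (hP : IsUnit P)
    (d : Fin n → Fin 3 → ℂ) (B : Fin n → Matrix (Fin 3) (Fin 3) ℂ)
    (hA : ∀ i, P⁻¹ * H i * P = Matrix.diagonal (d i))
    (hB : ∀ i, P⁻¹ * Y i * P = B i)
    (hindec' : ¬ ∃ W₁ W₂ : Submodule ℂ (Fin 3 → ℂ), W₁ ≠ ⊥ ∧ W₂ ≠ ⊥ ∧ IsCompl W₁ W₂ ∧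
      (∀ i, MatInvariantPair (Matrix.diagonal (d i)) (B i) W₁) ∧
      (∀ i, MatInvariantPair (Matrix.diagonal (d i)) (B i) W₂))
    (i₀ : Fin n)
    (hsc : ∀ j, j ≠ i₀ → (∃ c : ℂ, Matrix.diagonal (d j) = c • 1) ∧ B j = 0) :
    Concl H Y := by
  left
  refine ⟨i₀, P, hP, ?_, ?_⟩
  · rintro ⟨W₁, W₂, hb1, hb2, hc, hw1, hw2⟩
    apply hindec'
    have inv : ∀ (W : Submodule ℂ (Fin 3 → ℂ)),
        MatInvariantPair (P⁻¹ * H i₀ * P) (P⁻¹ * Y i₀ * P) W →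
        ∀ i, MatInvariantPair (Matrix.diagonal (d i)) (B i) W := by
      intro W hW i
      by_cases hi : i = i₀
      · subst hi; rw [← hA, ← hB]; exact hW
      · obtain ⟨⟨c, hcA⟩, hzB⟩ := hsc i hi
        constructor
        · intro x hx
          rw [hcA]
          have hmv : (c • (1 : Matrix (Fin 3) (Fin 3) ℂ)) *ᵥ x = c • x := by
            rw [smul_mulVec, one_mulVec]
          rw [hmv]; exact W.smul_mem c hx
        · intro x hx; rw [hzB, zero_mulVec]; exact W.zero_mem
    exact ⟨W₁, W₂, hb1, hb2, hc, inv W₁ hw1, inv W₂ hw2⟩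
  · intro i hi
    obtain ⟨⟨c, hcA⟩, hzB⟩ := hsc i hi
    exact ⟨c, by rw [hA, hcA], by rw [hB, hzB]⟩

lemma mainCase {n : ℕ} (H Y : Fin n → Matrix (Fin 3) (Fin 3) ℂ)
    (P : Matrix (Fin 3) (Fin 3) ℂ) (hP : IsUnit P)
    (d : Fin n → Fin 3 → ℂ) (B : Fin n → Matrix (Fin 3) (Fin 3) ℂ)
    (hA : ∀ i, P⁻¹ * H i * P = Matrix.diagonal (d i))
    (hB : ∀ i, P⁻¹ * Y i * P = B i)
    (hindec' : ¬ ∃ W₁ W₂ : Submodule ℂ (Fin 3 → ℂ), W₁ ≠ ⊥ ∧ W₂ ≠ ⊥ ∧ IsCompl W₁ W₂ ∧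
      (∀ i, MatInvariantPair (Matrix.diagonal (d i)) (B i) W₁) ∧
      (∀ i, MatInvariantPair (Matrix.diagonal (d i)) (B i) W₂))
    (hEdge : ∀ i p q, B i p q ≠ 0 → (d i p = d i q - 1 ∧ ∀ j, j ≠ i → d j p = d j q))
    (hBB : ∀ i j, B i * B j = B j * B i)
    (a b c : Fin 3) (hab : a ≠ b) (hac : a ≠ c) (hbc : b ≠ c)
    (hadj1 : ∃ i, B i a b ≠ 0 ∨ B i b a ≠ 0)
    (hadj2 : ∃ i, B i a c ≠ 0 ∨ B i c a ≠ 0) :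
    Concl H Y := by
  have hone : (1 : ℂ) ≠ 0 := one_ne_zero
  have hdiag0 : ∀ i p, B i p p = 0 := by
    intro i p; by_contra hcon
    exact hone (by linear_combination (hEdge i p p hcon).1)
  have hW : ∀ i p q, (B i p q ≠ 0 ∨ B i q p ≠ 0) →
      ((∀ j, j ≠ i → d j p = d j q) ∧ d i p ≠ d i q) := by
    intro i p q hpq
    rcases hpq with h | h
    · obtain ⟨h1, h2⟩ := hEdge i p q h
      exact ⟨h2, fun he => hone (by linear_combination h1 - he)⟩
    · obtain ⟨h1, h2⟩ := hEdge i q p h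
      exact ⟨fun j hj => (h2 j hj).symm, fun he => hone (by linear_combination h1 + he)⟩
  have hV : ∀ i j p q, B i p q ≠ 0 → B j q p = 0 := by
    intro i j p q h1; by_contra h2
    obtain ⟨e1, e2⟩ := hEdge i p q h1
    obtain ⟨f1, f2⟩ := hEdge j q p h2
    by_cases hij : j = i
    · subst hij
      exact two_ne_zero (by linear_combination e1 + f1 : (2:ℂ) = 0)
    · exact hone (by linear_combination f1 + e2 j hij)
  obtain ⟨i₁, h₁⟩ := hadj1
  obtain ⟨i₂, h₂⟩ := hadj2
  have wk₁ := hW i₁ a b h₁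
  have wk₂ := hW i₂ a c h₂
  by_cases hii : i₂ = i₁
  · subst hii
    apply caseL1 H Y P hP d B hA hB hindec' i₂
    intro j hj
    have e1 : d j a = d j b := wk₁.1 j hj
    have e2 : d j a = d j c := wk₂.1 j hj
    have hlab1 : B j a b = 0 ∧ B j b a = 0 := by
      have key : ¬ (B j a b ≠ 0 ∨ B j b a ≠ 0) := fun hor => (hW j a b hor).2 e1
      push_neg at key; exact key
    have hlab2 : B j a c = 0 ∧ B j c a = 0 := by
      have key : ¬ (B j a c ≠ 0 ∨ B j c a ≠ 0) := fun hor => (hW j a c hor).2 e2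
      push_neg at key; exact key
    have hlab3 : B j b c = 0 ∧ B j c b = 0 := by
      have key : ¬ (B j b c ≠ 0 ∨ B j c b ≠ 0) :=
        fun hor => (hW j b c hor).2 (by linear_combination e2 - e1)
      push_neg at key; exact key
    constructor
    · refine ⟨d j a, ?_⟩
      ext x y
      by_cases hxy : x = y
      · subst hxy
        rw [Matrix.diagonal_apply_eq, Matrix.smul_apply, Matrix.one_apply_eq, smul_eq_mul,
          mul_one]
        rcases fin3_cover a b c x hab hac hbc with h | h | h <;> rw [h]
        · exact e1.symm
        · exact e2.symm
      · rw [Matrix.diagonal_apply_ne _ hxy, Matrix.smul_apply, Matrix.one_apply_ne hxy,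
          smul_eq_mul, mul_zero]
    · ext x y
      rw [Matrix.zero_apply]
      rcases fin3_cover a b c x hab hac hbc with h | h | h <;>
        rcases fin3_cover a b c y hab hac hbc with h' | h' | h' <;> rw [h, h'] <;>
        first
          | exact hdiag0 j _
          | exact hlab1.1
          | exact hlab1.2
          | exact hlab2.1
          | exact hlab2.2
          | exact hlab3.1
          | exact hlab3.2
  -- two distinct labels
  · have hii₂ : i₂ ≠ i₁ := hii
    have hii₁ : i₁ ≠ i₂ := fun h => hii h.symm
    have hthird : ∀ m, B m b c = 0 ∧ B m c b = 0 := by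
      intro m
      have key : ¬ (B m b c ≠ 0 ∨ B m c b ≠ 0) := by
        intro hor
        have wk₃ := hW m b c hor
        by_cases hm1 : m = i₁
        · subst hm1
          exact wk₂.2 ((wk₁.1 i₂ hii₂).trans (wk₃.1 i₂ hii₂))
        · by_cases hm2 : m = i₂
          · subst hm2
            exact wk₁.2 ((wk₂.1 i₁ hii₁).trans (wk₃.1 i₁ hii₁).symm)
          · exact wk₃.2 ((wk₁.1 m hm1).symm.trans (wk₂.1 m hm2))
      push_neg at key
      exact key
    have hlabAB : ∀ j, j ≠ i₁ → B j a b = 0 ∧ B j b a = 0 := by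
      intro j hj
      have key : ¬ (B j a b ≠ 0 ∨ B j b a ≠ 0) := fun hor => (hW j a b hor).2 (wk₁.1 j hj)
      push_neg at key; exact key
    have hlabAC : ∀ j, j ≠ i₂ → B j a c = 0 ∧ B j c a = 0 := by
      intro j hj
      have key : ¬ (B j a c ≠ 0 ∨ B j c a ≠ 0) := fun hor => (hW j a c hor).2 (wk₂.1 j hj)
      push_neg at key; exact key
    have hothers : ∀ j, j ≠ i₁ → j ≠ i₂ →
        Matrix.diagonal (d j) = d j a • 1 ∧ B j = 0 := by
      intro j hj1 hj2
      have e1 : d j a = d j b := wk₁.1 j hj1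
      have e2 : d j a = d j c := wk₂.1 j hj2
      constructor
      · ext x y
        by_cases hxy : x = y
        · subst hxy
          rw [Matrix.diagonal_apply_eq, Matrix.smul_apply, Matrix.one_apply_eq, smul_eq_mul,
            mul_one]
          rcases fin3_cover a b c x hab hac hbc with h | h | h <;> rw [h]
          · exact e1.symm
          · exact e2.symm
        · rw [Matrix.diagonal_apply_ne _ hxy, Matrix.smul_apply, Matrix.one_apply_ne hxy,
            smul_eq_mul, mul_zero]
      · ext x y
        rw [Matrix.zero_apply]
        rcases fin3_cover a b c x hab hac hbc with h | h | h <;>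
          rcases fin3_cover a b c y hab hac hbc with h' | h' | h' <;> rw [h, h'] <;>
          first
            | exact hdiag0 j _
            | exact (hlabAB j hj1).1
            | exact (hlabAB j hj1).2
            | exact (hlabAC j hj2).1
            | exact (hlabAC j hj2).2
            | exact (hthird j).1
            | exact (hthird j).2
    rcases h₁ with hba' | hba
    · rcases h₂ with hca' | hca
      · -- sink : B i₁ a b ≠ 0, B i₂ a c ≠ 0
        have zba : B i₁ b a = 0 := hV i₁ i₁ a b hba'
        have zac : B i₁ a c = 0 := (hlabAC i₁ hii₁).1
        have zca : B i₁ c a = 0 := (hlabAC i₁ hii₁).2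
        have zbc : B i₁ b c = 0 := (hthird i₁).1
        have zcb : B i₁ c b = 0 := (hthird i₁).2
        have wab : B i₂ a b = 0 := (hlabAB i₂ hii₂).1
        have wba : B i₂ b a = 0 := (hlabAB i₂ hii₂).2
        have wca : B i₂ c a = 0 := hV i₂ i₂ a c hca'
        have wbc : B i₂ b c = 0 := (hthird i₂).1
        have wcb : B i₂ c b = 0 := (hthird i₂).2
        have dp1 : d i₁ a = d i₁ b - 1 := (hEdge i₁ a b hba').1
        have dp2 : d i₁ c = d i₁ b - 1 := by
          have h' : d i₁ a = d i₁ c := wk₂.1 i₁ hii₁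
          linear_combination dp1 - h'
        have dq1 : d i₂ a = d i₂ c - 1 := (hEdge i₂ a c hca').1
        have dq2 : d i₂ b = d i₂ c - 1 := by
          have h' : d i₂ a = d i₂ b := wk₁.1 i₂ hii₂
          linear_combination dq1 - h'
        obtain ⟨Q, hQu, hQc, hQd⟩ := mono_conj ![c, b, a]
          (fun x y h => inj3 c b a (Ne.symm hbc) (Ne.symm hac) (Ne.symm hab) x y h)
          ![(B i₂ a c)⁻¹, (B i₁ a b)⁻¹, 1]
          (by
            intro k
            fin_cases k
            · simpa using inv_ne_zero hca'
            · simpa using inv_ne_zero hba'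
            · simpa using one_ne_zero)
        have hSu : IsUnit (P * Q) := hP.mul hQu
        have hSconj : ∀ M : Matrix (Fin 3) (Fin 3) ℂ,
            (P * Q)⁻¹ * M * (P * Q) = Q⁻¹ * (P⁻¹ * M * P) * Q := by
          intro M
          rw [Matrix.mul_inv_rev]
          simp only [Matrix.mul_assoc]
        refine Or.inr (Or.inr ⟨i₁, i₂, hii₁, P * Q, hSu, d i₁ b, d i₂ c, ?_, ?_, ?_, ?_, ?_⟩)
        · rw [hSconj, hA, hQd]
          refine congrArg Matrix.diagonal (funext fun r => ?_)
          fin_cases r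
          · simpa using dp2
          · simp
          · simpa using dp1
        · rw [hSconj, hB, hQc]
          ext r q
          fin_cases r <;> fin_cases q <;>
            simp [Matrix.single, hdiag0, zba, zac, zca, zbc, zcb,
              mul_inv_cancel₀ hba']
        · rw [hSconj, hA, hQd]
          refine congrArg Matrix.diagonal (funext fun r => ?_)
          fin_cases r
          · simp
          · simpa using dq2
          · simpa using dq1
        · rw [hSconj, hB, hQc]
          ext r q
          fin_cases r <;> fin_cases q <;>
            simp [Matrix.single, hdiag0, wab, wba, wca, wbc, wcb,
              mul_inv_cancel₀ hca']
        · intro i hi1 hi2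
          obtain ⟨hsc, hz⟩ := hothers i hi1 hi2
          exact ⟨d i a, by rw [hSconj, hA, hsc, conj_smul_one hQu],
            by rw [hSconj, hB, hz, Matrix.mul_zero, Matrix.zero_mul]⟩
      · -- chain : c → a (i₂), a → b (i₁) : contradiction
        exfalso
        have hsum1 : (B i₂ * B i₁) c b = B i₂ c a * B i₁ a b := by
          rw [Matrix.mul_apply]
          apply Finset.sum_eq_single_of_mem a (Finset.mem_univ a)
          intro m _ hm
          rcases fin3_cover a b c m hab hac hbc with h | h | h
          · exact absurd h hm
          · rw [h]; exact mul_eq_zero_of_right _ (hdiag0 i₁ b)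
          · rw [h]; exact mul_eq_zero_of_left (hdiag0 i₂ c) _
        have hsum2 : (B i₁ * B i₂) c b = 0 := by
          rw [Matrix.mul_apply]
          apply Finset.sum_eq_zero
          intro m _
          rcases fin3_cover a b c m hab hac hbc with h | h | h <;> rw [h]
          · exact mul_eq_zero_of_right _ (hlabAB i₂ hii₂).1
          · exact mul_eq_zero_of_left (hthird i₁).2 _
          · exact mul_eq_zero_of_left (hdiag0 i₁ c) _
        have hcc : (B i₂ * B i₁) c b = (B i₁ * B i₂) c b := by rw [hBB i₂ i₁]
        rw [hsum1, hsum2] at hcc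
        exact (mul_ne_zero hca hba') hcc

    · rcases h₂ with hca' | hca
      · -- chain : b → a (i₁), a → c (i₂) : contradiction
        exfalso
        have hsum1 : (B i₁ * B i₂) b c = B i₁ b a * B i₂ a c := by
          rw [Matrix.mul_apply]
          apply Finset.sum_eq_single_of_mem a (Finset.mem_univ a)
          intro m _ hm
          rcases fin3_cover a b c m hab hac hbc with h | h | h
          · exact absurd h hm
          · rw [h]; exact mul_eq_zero_of_left (hdiag0 i₁ b) _
          · rw [h]; exact mul_eq_zero_of_right _ (hdiag0 i₂ c)
        have hsum2 : (B i₂ * B i₁) b c = 0 := by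
          rw [Matrix.mul_apply]
          apply Finset.sum_eq_zero
          intro m _
          rcases fin3_cover a b c m hab hac hbc with h | h | h <;> rw [h]
          · exact mul_eq_zero_of_right _ (hlabAC i₁ hii₁).1
          · exact mul_eq_zero_of_left (hdiag0 i₂ b) _
          · exact mul_eq_zero_of_right _ (hdiag0 i₁ c)
        have hcc : (B i₁ * B i₂) b c = (B i₂ * B i₁) b c := by rw [hBB i₁ i₂]
        rw [hsum1, hsum2] at hcc
        exact (mul_ne_zero hba hca') hcc
      · -- source : B i₁ b a ≠ 0, B i₂ c a ≠ 0
        have zab : B i₁ a b = 0 := hV i₁ i₁ b a hba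
        have zac : B i₁ a c = 0 := (hlabAC i₁ hii₁).1
        have zca : B i₁ c a = 0 := (hlabAC i₁ hii₁).2
        have zbc : B i₁ b c = 0 := (hthird i₁).1
        have zcb : B i₁ c b = 0 := (hthird i₁).2
        have wab : B i₂ a b = 0 := (hlabAB i₂ hii₂).1
        have wba : B i₂ b a = 0 := (hlabAB i₂ hii₂).2
        have wac : B i₂ a c = 0 := hV i₂ i₂ c a hca
        have wbc : B i₂ b c = 0 := (hthird i₂).1
        have wcb : B i₂ c b = 0 := (hthird i₂).2
        have dp1 : d i₁ b = d i₁ a - 1 := (hEdge i₁ b a hba).1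
        have dp2 : d i₁ c = d i₁ a := (wk₂.1 i₁ hii₁).symm
        have dq1 : d i₂ c = d i₂ a - 1 := (hEdge i₂ c a hca).1
        have dq2 : d i₂ b = d i₂ a := (wk₁.1 i₂ hii₂).symm
        obtain ⟨Q, hQu, hQc, hQd⟩ := mono_conj ![a, b, c]
          (fun x y h => inj3 a b c hab hac hbc x y h)
          ![1, B i₁ b a, B i₂ c a]
          (by
            intro k
            fin_cases k
            · simpa using one_ne_zero
            · simpa using hba
            · simpa using hca)
        have hSu : IsUnit (P * Q) := hP.mul hQu
        have hSconj : ∀ M : Matrix (Fin 3) (Fin 3) ℂ,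
            (P * Q)⁻¹ * M * (P * Q) = Q⁻¹ * (P⁻¹ * M * P) * Q := by
          intro M
          rw [Matrix.mul_inv_rev]
          simp only [Matrix.mul_assoc]
        refine Or.inr (Or.inl ⟨i₁, i₂, hii₁, P * Q, hSu, d i₁ a, d i₂ a, ?_, ?_, ?_, ?_, ?_⟩)
        · rw [hSconj, hA, hQd]
          refine congrArg Matrix.diagonal (funext fun r => ?_)
          fin_cases r
          · simp
          · simpa using dp1
          · simpa using dp2
        · rw [hSconj, hB, hQc]
          ext r q
          fin_cases r <;> fin_cases q <;>
            simp [Matrix.single, hdiag0, zab, zac, zca, zbc, zcb,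
              inv_mul_cancel₀ hba]
        · rw [hSconj, hA, hQd]
          refine congrArg Matrix.diagonal (funext fun r => ?_)
          fin_cases r
          · simp
          · simpa using dq2
          · simpa using dq1
        · rw [hSconj, hB, hQc]
          ext r q
          fin_cases r <;> fin_cases q <;>
            simp [Matrix.single, hdiag0, wab, wba, wac, wbc, wcb,
              inv_mul_cancel₀ hca]
        · intro i hi1 hi2
          obtain ⟨hsc, hz⟩ := hothers i hi1 hi2
          exact ⟨d i a, by rw [hSconj, hA, hsc, conj_smul_one hQu],
            by rw [hSconj, hB, hz, Matrix.mul_zero, Matrix.zero_mul]⟩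

/-- Classification, up to reordering the factors and simultaneous
similarity, of the three-dimensional indecomposable representations of `𝔟ⁿ` with each `H_i`
diagonalizable.  `Matrix.stdBasisMatrix p q 1` is the matrix unit `E_{p+1,q+1}`. -/
theorem statement9 {n : ℕ} (hn : 1 ≤ n) (H Y : Fin n → Matrix (Fin 3) (Fin 3) ℂ)
    (hHH : ∀ i j, Commute (H i) (H j)) (hYY : ∀ i j, Commute (Y i) (Y j))
    (hHY : ∀ i j, i ≠ j → Commute (H i) (Y j))
    (hrel : ∀ i, H i * Y i - Y i * H i = -(Y i))
    (hdiag : ∀ i, ∃ P : Matrix (Fin 3) (Fin 3) ℂ, IsUnit P ∧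
      ∃ d : Fin 3 → ℂ, H i = P * Matrix.diagonal d * P⁻¹)
    (hindec : ¬ ∃ W₁ W₂ : Submodule ℂ (Fin 3 → ℂ), W₁ ≠ ⊥ ∧ W₂ ≠ ⊥ ∧ IsCompl W₁ W₂ ∧
      (∀ i, MatInvariantPair (H i) (Y i) W₁) ∧ (∀ i, MatInvariantPair (H i) (Y i) W₂)) :
    (∃ i₀ : Fin n, ∃ S : Matrix (Fin 3) (Fin 3) ℂ, IsUnit S ∧
      MatPairIndec (S⁻¹ * H i₀ * S) (S⁻¹ * Y i₀ * S) ∧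
      ∀ i : Fin n, i ≠ i₀ → ∃ c : ℂ,
        S⁻¹ * H i * S = c • (1 : Matrix (Fin 3) (Fin 3) ℂ) ∧ S⁻¹ * Y i * S = 0) ∨
    (∃ i₁ i₂ : Fin n, i₁ ≠ i₂ ∧ ∃ S : Matrix (Fin 3) (Fin 3) ℂ, IsUnit S ∧
      ∃ lam₁ lam₂ : ℂ,
        S⁻¹ * H i₁ * S = Matrix.diagonal ![lam₁, lam₁ - 1, lam₁] ∧
        S⁻¹ * Y i₁ * S = Matrix.single 1 0 (1 : ℂ) ∧
        S⁻¹ * H i₂ * S = Matrix.diagonal ![lam₂, lam₂, lam₂ - 1] ∧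
        S⁻¹ * Y i₂ * S = Matrix.single 2 0 (1 : ℂ) ∧
        ∀ i : Fin n, i ≠ i₁ → i ≠ i₂ → ∃ c : ℂ,
          S⁻¹ * H i * S = c • (1 : Matrix (Fin 3) (Fin 3) ℂ) ∧ S⁻¹ * Y i * S = 0) ∨
    (∃ i₁ i₂ : Fin n, i₁ ≠ i₂ ∧ ∃ S : Matrix (Fin 3) (Fin 3) ℂ, IsUnit S ∧
      ∃ a₁ a₂ : ℂ,
        S⁻¹ * H i₁ * S = Matrix.diagonal ![a₁ - 1, a₁, a₁ - 1] ∧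
        S⁻¹ * Y i₁ * S = Matrix.single 2 1 (1 : ℂ) ∧
        S⁻¹ * H i₂ * S = Matrix.diagonal ![a₂, a₂ - 1, a₂ - 1] ∧
        S⁻¹ * Y i₂ * S = Matrix.single 2 0 (1 : ℂ) ∧
        ∀ i : Fin n, i ≠ i₁ → i ≠ i₂ → ∃ c : ℂ,
          S⁻¹ * H i * S = c • (1 : Matrix (Fin 3) (Fin 3) ℂ) ∧ S⁻¹ * Y i * S = 0) := by
  classical
  obtain ⟨P, hP, hPd⟩ := simDiag H hHH hdiag
  choose d hd using hPd
  have hdet := (isUnit_iff_isUnit_det P).mp hP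
  have h1 : P * P⁻¹ = 1 := mul_nonsing_inv P hdet
  have h2 : P⁻¹ * P = 1 := nonsing_inv_mul P hdet
  set B : Fin n → Matrix (Fin 3) (Fin 3) ℂ := fun i => P⁻¹ * Y i * P with hBdef
  have hB : ∀ i, P⁻¹ * Y i * P = B i := fun i => rfl
  have hA : ∀ i, P⁻¹ * H i * P = Matrix.diagonal (d i) := by
    intro i
    rw [Matrix.mul_assoc, hd i, ← Matrix.mul_assoc, h2, Matrix.one_mul]
  have hconj2 : ∀ M N : Matrix (Fin 3) (Fin 3) ℂ,
      (P⁻¹ * M * P) * (P⁻¹ * N * P) = P⁻¹ * (M * N) * P := by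
    intro M N
    simp only [Matrix.mul_assoc]
    rw [← Matrix.mul_assoc P P⁻¹, h1, Matrix.one_mul]
  have hcjsub : ∀ M N : Matrix (Fin 3) (Fin 3) ℂ,
      P⁻¹ * (M - N) * P = P⁻¹ * M * P - P⁻¹ * N * P := by
    intro M N; rw [Matrix.mul_sub, Matrix.sub_mul]
  have hcjneg : ∀ M : Matrix (Fin 3) (Fin 3) ℂ, P⁻¹ * (-M) * P = -(P⁻¹ * M * P) := by
    intro M; rw [Matrix.mul_neg, Matrix.neg_mul]
  -- transferred relations
  have hrelAB : ∀ i, Matrix.diagonal (d i) * B i - B i * Matrix.diagonal (d i) = -(B i) := by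
    intro i
    have h := congrArg (fun M => P⁻¹ * M * P) (hrel i)
    rw [hcjsub, hcjneg, ← hconj2, ← hconj2, hA i, hB i] at h
    exact h
  have hcomAB : ∀ i j, j ≠ i →
      Matrix.diagonal (d j) * B i = B i * Matrix.diagonal (d j) := by
    intro i j hj
    have h := congrArg (fun M => P⁻¹ * M * P) (hHY j i hj).eq
    rw [← hconj2, ← hconj2, hA j, hB i] at h
    exact h
  have hBB : ∀ i j, B i * B j = B j * B i := by
    intro i j
    have h := congrArg (fun M => P⁻¹ * M * P) (hYY i j).eq
    rw [← hconj2, ← hconj2, hB i, hB j] at h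
    exact h
  have hEdge : ∀ i p q, B i p q ≠ 0 →
      (d i p = d i q - 1 ∧ ∀ j, j ≠ i → d j p = d j q) := by
    intro i p q hne
    constructor
    · have h := congrArg (fun M => M p q) (hrelAB i)
      simp only [Matrix.sub_apply, Matrix.neg_apply, Matrix.diagonal_mul,
        Matrix.mul_diagonal] at h
      have h2' : (d i p - (d i q - 1)) * B i p q = 0 := by linear_combination h
      rcases mul_eq_zero.mp h2' with h3 | h3
      · exact sub_eq_zero.mp h3
      · exact absurd h3 hne
    · intro j hj
      have h := congrArg (fun M => M p q) (hcomAB i j hj)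
      simp only [Matrix.diagonal_mul, Matrix.mul_diagonal] at h
      have h2' : (d j p - d j q) * B i p q = 0 := by linear_combination h
      rcases mul_eq_zero.mp h2' with h3 | h3
      · exact sub_eq_zero.mp h3
      · exact absurd h3 hne
  -- transferred indecomposability
  have hdt := dec_transfer H Y P hP hindec
  have hindec' : ¬ ∃ W₁ W₂ : Submodule ℂ (Fin 3 → ℂ), W₁ ≠ ⊥ ∧ W₂ ≠ ⊥ ∧ IsCompl W₁ W₂ ∧
      (∀ i, MatInvariantPair (Matrix.diagonal (d i)) (B i) W₁) ∧
      (∀ i, MatInvariantPair (Matrix.diagonal (d i)) (B i) W₂) := by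
    simpa only [hA, hB] using hdt
  -- adjacency from indecomposability
  have hsplit : ∀ t : Fin 3, ∃ i, ∃ q, q ≠ t ∧ (B i t q ≠ 0 ∨ B i q t ≠ 0) := by
    intro t
    by_contra hcon
    push_neg at hcon
    apply hindec'
    refine dec_split (fun i => Matrix.diagonal (d i)) B {t} t (t + 1)
      rfl (by simp only [Set.mem_singleton_iff]; fin_cases t <;> decide) ?_
    intro i p q hpq
    simp only [Set.mem_singleton_iff] at hpq
    by_cases hp : p = t
    · have hq : q ≠ t := hpq.mp hp
      subst hp
      exact ⟨Matrix.diagonal_apply_ne _ (Ne.symm hq), (hcon i q hq).1⟩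
    · have hq : q = t := by
        by_contra hq'
        exact hp (hpq.mpr hq')
      subst hq
      exact ⟨Matrix.diagonal_apply_ne _ hp, (hcon i p hp).2⟩
  have hadj0 : (∃ i, B i 0 1 ≠ 0 ∨ B i 1 0 ≠ 0) ∨ (∃ i, B i 0 2 ≠ 0 ∨ B i 2 0 ≠ 0) := by
    obtain ⟨i, q, hq, hor⟩ := hsplit 0
    rcases fin3_cover 0 1 2 q (by decide) (by decide) (by decide) with h | h | h
    · exact absurd h hq
    · rw [h] at hor; exact Or.inl ⟨i, hor⟩
    · rw [h] at hor; exact Or.inr ⟨i, hor⟩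
  have hadj1 : (∃ i, B i 1 0 ≠ 0 ∨ B i 0 1 ≠ 0) ∨ (∃ i, B i 1 2 ≠ 0 ∨ B i 2 1 ≠ 0) := by
    obtain ⟨i, q, hq, hor⟩ := hsplit 1
    rcases fin3_cover 1 0 2 q (by decide) (by decide) (by decide) with h | h | h
    · exact absurd h hq
    · rw [h] at hor; exact Or.inl ⟨i, hor⟩
    · rw [h] at hor; exact Or.inr ⟨i, hor⟩
  have hadj2 : (∃ i, B i 2 0 ≠ 0 ∨ B i 0 2 ≠ 0) ∨ (∃ i, B i 2 1 ≠ 0 ∨ B i 1 2 ≠ 0) := by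
    obtain ⟨i, q, hq, hor⟩ := hsplit 2
    rcases fin3_cover 2 0 1 q (by decide) (by decide) (by decide) with h | h | h
    · exact absurd h hq
    · rw [h] at hor; exact Or.inl ⟨i, hor⟩
    · rw [h] at hor; exact Or.inr ⟨i, hor⟩
  have swap : ∀ x y : Fin 3, (∃ i, B i x y ≠ 0 ∨ B i y x ≠ 0) →
      (∃ i, B i y x ≠ 0 ∨ B i x y ≠ 0) := by
    rintro x y ⟨i, h⟩; exact ⟨i, h.symm⟩
  have main := mainCase H Y P hP d B hA hB hindec' hEdge hBB
  rcases hadj0 with x01 | x02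
  · rcases hadj1 with y01 | y12
    · rcases hadj2 with z02 | z12
      · exact main 0 1 2 (by decide) (by decide) (by decide) x01 (swap 2 0 z02)
      · exact main 1 0 2 (by decide) (by decide) (by decide) (swap 0 1 x01) (swap 2 1 z12)
    · exact main 1 0 2 (by decide) (by decide) (by decide) (swap 0 1 x01) y12
  · rcases hadj1 with y01 | y12
    · exact main 0 1 2 (by decide) (by decide) (by decide) (swap 1 0 y01) x02
    · exact main 2 0 1 (by decide) (by decide) (by decide) (swap 0 2 x02) (swap 1 2 y12)
end

section
/- Let n ≥ 2, let λ₁,…,λₙ > 0 be real, let μ₁, μ₂ > 0, and for z, w ∈ D^n set L^{(λ)}(z,w) := ∏_{j=1}^n (1 − z_j w_j)^{−λ_j} (principal branch). Let M(z,w) ∈ M₃(ℂ) be the matrix with entries M₁₁ = L^{(λ)}, M₁₂ = λ₁⁻¹∂_{w₁}L^{(λ)}, M₁₃ = λ₂⁻¹∂_{w₂}L^{(λ)}, M₂₁ = λ₁⁻¹∂_{z₁}L^{(λ)}, M₂₂ = λ₁⁻²∂_{z₁}∂_{w₁}L^{(λ)} + μ₁²·L^{(λ+2e₁)}, M₂₃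 = λ₁⁻¹λ₂⁻¹∂_{z₁}∂_{w₂}L^{(λ)}, M₃₁ = λ₂⁻¹∂_{z₂}L^{(λ)}, M₃₂ = λ₂⁻¹λ₁⁻¹∂_{z₂}∂_{w₁}L^{(λ)}, M₃₃ = λ₂⁻²∂_{z₂}∂_{w₂}L^{(λ)} + μ₂²·L^{(λ+2e₂)}, where λ + 2e_i is λ with λ_i replaced by λ_i + 2. Then for all z, w ∈ D^n, M(z,w) = D(z,w) · A(z,w) · D(z,w) · ∏_{j=1}^n (1 − z_j w_j)^{−λ_j − 2δ_{1j} − 2δ_{2j}}, where D(z,w) = diag( (1−z₁w₁)(1−z₂w₂), 1−z₂w₂, 1−z₁w₁ ), A(z,w) is the matrix with rows (1, z₁, z₂), (w₁, 1/λ₁ + μ₁² + z₁w₁, w₁z₂), (w₂, z₁w₂, 1/λ₂ + μ₂² + z₂w₂), and δ is the Kronecker delta. -/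
open Matrix

/-- Complex partial derivative in the `i`-th coordinate of the first variable. -/
noncomputable def pdz {n : ℕ} (f : (Fin n → ℂ) → (Fin n → ℂ) → ℂ) (i : Fin n) :
    (Fin n → ℂ) → (Fin n → ℂ) → ℂ :=
  fun z w => fderiv ℂ (fun z' => f z' w) z (Pi.single i 1)

/-- Complex partial derivative in the `j`-th coordinate of the second variable. -/
noncomputable def pdw {n : ℕ} (f : (Fin n → ℂ) → (Fin n → ℂ) → ℂ) (j : Fin n) :
    (Fin n → ℂ) → (Fin n → ℂ) → ℂ :=
  fun z w => fderiv ℂ (fun w' => f z w') w (Pi.single j 1)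

/-- The sesquiholomorphic scalar kernel `L^{(λ)}(z,w) = ∏ⱼ (1 − zⱼwⱼ)^{−λⱼ}`
(principal branch). -/
noncomputable def Lker {n : ℕ} (lam : Fin n → ℝ) (z w : Fin n → ℂ) : ℂ :=
  ∏ j, (1 - z j * w j) ^ (-(lam j : ℂ))

lemma re_pos_aux {a b : ℂ} (ha : ‖a‖ < 1) (hb : ‖b‖ < 1) :
    0 < (1 - a * b).re := by
  have h1 : ‖a * b‖ < 1 := by
    rw [norm_mul]
    calc ‖a‖ * ‖b‖ ≤ ‖a‖ * 1 := by
          exact mul_le_mul_of_nonneg_left hb.le (norm_nonneg a)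
      _ < 1 := by simpa using ha
  have h2 : (a * b).re ≤ ‖a * b‖ := Complex.re_le_norm _
  simp only [Complex.sub_re, Complex.one_re]
  linarith

lemma slit_aux {u : ℂ} (h : 0 < u.re) : u ∈ Complex.slitPlane := Or.inl h

lemma ne_zero_aux {u : ℂ} (h : 0 < u.re) : u ≠ 0 := by
  intro h0; rw [h0] at h; simp at h

/-- cpow splitting: `u ^ (-(a)-1) = u ^ (-(a)) * u⁻¹`. -/
lemma cpow_sub_one_aux {u : ℂ} (h : u ≠ 0) (a : ℂ) : u ^ (-a - 1) = u ^ (-a) * u⁻¹ := by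
  rw [sub_eq_add_neg, Complex.cpow_add _ _ h, Complex.cpow_neg_one]

section main
variable {n : ℕ}

/-- Derivative of a single factor `z' ↦ (1 - z'_j c_j)^(-λ_j)` on `ℂⁿ`. -/
lemma hasFDerivAt_factor (lam : Fin n → ℝ) (c : Fin n → ℂ) (z : Fin n → ℂ) (j : Fin n)
    (h : 0 < (1 - z j * c j).re) :
    HasFDerivAt (fun z' : Fin n → ℂ => (1 - z' j * c j) ^ (-(lam j : ℂ)))
      ((((lam j : ℂ) * c j * (1 - z j * c j) ^ (-(lam j : ℂ) - 1)) •
        (ContinuousLinearMap.proj j : (Fin n → ℂ) →L[ℂ] ℂ))) z := by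
  have h1 : HasDerivAt (fun t : ℂ => (1 - t * c j) ^ (-(lam j : ℂ)))
      ((lam j : ℂ) * c j * (1 - z j * c j) ^ (-(lam j : ℂ) - 1)) (z j) := by
    have hb : HasDerivAt (fun t : ℂ => 1 - t * c j) (-(c j)) (z j) := by
      simpa using ((hasDerivAt_id (z j)).mul_const (c j)).const_sub 1
    have := hb.cpow_const (c := -(lam j : ℂ)) (slit_aux h)
    convert this using 1
    ring
  have h2 : HasFDerivAt (fun z' : Fin n → ℂ => z' j)
      (ContinuousLinearMap.proj j : (Fin n → ℂ) →L[ℂ] ℂ) z := by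
    exact (ContinuousLinearMap.proj (R := ℂ) (φ := fun _ : Fin n => ℂ) j).hasFDerivAt
  exact h1.comp_hasFDerivAt z h2

lemma hasFDerivAt_Lprod (lam : Fin n → ℝ) (c : Fin n → ℂ) (z : Fin n → ℂ)
    (h : ∀ k, 0 < (1 - z k * c k).re) :
    HasFDerivAt (fun z' : Fin n → ℂ => ∏ j, (1 - z' j * c j) ^ (-(lam j : ℂ)))
      (∑ j, (∏ k ∈ Finset.univ.erase j, (1 - z k * c k) ^ (-(lam k : ℂ))) •
        (((lam j : ℂ) * c j * (1 - z j * c j) ^ (-(lam j : ℂ) - 1)) •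
          (ContinuousLinearMap.proj j : (Fin n → ℂ) →L[ℂ] ℂ))) z :=
  HasFDerivAt.finset_prod fun j _ => hasFDerivAt_factor lam c z j (h j)

end main

section vals
variable {n : ℕ}

lemma Lprod_fderiv_apply (lam : Fin n → ℝ) (c : Fin n → ℂ) (z : Fin n → ℂ)
    (h : ∀ k, 0 < (1 - z k * c k).re) (i : Fin n) :
    fderiv ℂ (fun z' : Fin n → ℂ => ∏ j, (1 - z' j * c j) ^ (-(lam j : ℂ))) z (Pi.single i 1)
      = (lam i : ℂ) * c i * (1 - z i * c i)⁻¹ *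
          ∏ j, (1 - z j * c j) ^ (-(lam j : ℂ)) := by
  rw [(hasFDerivAt_Lprod lam c z h).fderiv]
  rw [ContinuousLinearMap.sum_apply]
  rw [Finset.sum_eq_single i]
  · simp only [ContinuousLinearMap.smul_apply, ContinuousLinearMap.proj_apply,
      Pi.single_eq_same, smul_eq_mul, mul_one]
    rw [cpow_sub_one_aux (ne_zero_aux (h i)) (lam i : ℂ),
      ← Finset.mul_prod_erase Finset.univ _ (Finset.mem_univ i)]
    ring
  · intro b _ hb
    simp [ContinuousLinearMap.smul_apply, Pi.single_eq_of_ne hb]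
  · intro hi; exact absurd (Finset.mem_univ i) hi

lemma pdz_Lker (lam : Fin n → ℝ) (i : Fin n) (z w : Fin n → ℂ)
    (h : ∀ k, 0 < (1 - z k * w k).re) :
    pdz (Lker lam) i z w
      = (lam i : ℂ) * w i * (1 - z i * w i)⁻¹ * Lker lam z w := by
  unfold pdz Lker
  exact Lprod_fderiv_apply lam w z h i

lemma Lker_swap (lam : Fin n → ℝ) (z w : Fin n → ℂ) :
    Lker lam z w = ∏ j, (1 - w j * z j) ^ (-(lam j : ℂ)) := by
  unfold Lker
  exact Finset.prod_congr rfl fun j _ => by rw [mul_comm]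

lemma pdw_Lker (lam : Fin n → ℝ) (i : Fin n) (z w : Fin n → ℂ)
    (h : ∀ k, 0 < (1 - z k * w k).re) :
    pdw (Lker lam) i z w
      = (lam i : ℂ) * z i * (1 - z i * w i)⁻¹ * Lker lam z w := by
  unfold pdw
  have hfun : (fun w' : Fin n → ℂ => Lker lam z w')
      = fun w' : Fin n → ℂ => ∏ j, (1 - w' j * z j) ^ (-(lam j : ℂ)) := by
    funext w'; exact Lker_swap lam z w'
  rw [hfun, Lprod_fderiv_apply lam z w (fun k => by rw [mul_comm]; exact h k) i,
    ← Lker_swap, mul_comm (w i) (z i)]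

end vals

section second
variable {n : ℕ}

lemma pdzw_Lker (lam : Fin n → ℝ) (i j : Fin n) (z w : Fin n → ℂ)
    (hre : ∀ k, 0 < (1 - z k * w k).re) :
    pdz (pdw (Lker lam) j) i z w =
      (lam j : ℂ) * z j * (1 - z j * w j)⁻¹ *
          ((lam i : ℂ) * w i * (1 - z i * w i)⁻¹) * Lker lam z w
        + (if i = j then
            (lam j : ℂ) * ((1 - z j * w j)⁻¹ + z j * w j * (1 - z j * w j)⁻¹ * (1 - z j * w j)⁻¹) *
              Lker lam z w
          else 0) := by
  have hev : (fun z' => pdw (Lker lam) j z' w) =ᶠ[nhds z]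
      (fun z' => (lam j : ℂ) * z' j * (1 - z' j * w j)⁻¹ * Lker lam z' w) := by
    have hopen : ∀ᶠ z' in nhds z, ∀ k, 0 < (1 - z' k * w k).re := by
      rw [Filter.eventually_all]
      intro k
      have hc : Continuous fun z' : Fin n → ℂ => (1 - z' k * w k).re := by fun_prop
      have := hc.continuousAt (x := z) |>.eventually_mem (Ioi_mem_nhds (hre k))
      exact this.mono fun x hx => hx
    exact hopen.mono fun z' hz' => pdw_Lker lam j z' w hz'
  unfold pdz
  rw [hev.fderiv_eq]
  -- derivative of the scalar factor
  have hg : HasDerivAt (fun t : ℂ => (lam j : ℂ) * t * (1 - t * w j)⁻¹)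
      ((lam j : ℂ) * ((1 - z j * w j)⁻¹ + z j * w j * (1 - z j * w j)⁻¹ * (1 - z j * w j)⁻¹)) (z j) := by
    have hb : HasDerivAt (fun t : ℂ => 1 - t * w j) (-(w j)) (z j) := by
      simpa using ((hasDerivAt_id (z j)).mul_const (w j)).const_sub 1
    have hinv := hb.inv (ne_zero_aux (hre j))
    have h2 := ((hasDerivAt_id (z j)).mul hinv).const_mul (lam j : ℂ)
    have h3 : HasDerivAt (fun t : ℂ => (lam j : ℂ) * (t * (1 - t * w j)⁻¹))
        ((lam j : ℂ) * (1 * (1 - z j * w j)⁻¹ +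
          id (z j) * (-(-(w j)) / (1 - z j * w j) ^ 2))) (z j) := h2
    have h4 : (fun t : ℂ => (lam j : ℂ) * (t * (1 - t * w j)⁻¹))
        = fun t : ℂ => (lam j : ℂ) * t * (1 - t * w j)⁻¹ := by
      funext t; ring
    rw [h4] at h3
    convert h3 using 1
    simp only [one_mul, id_eq, div_eq_mul_inv, sq, mul_inv, neg_neg]
    ring
  have hG : HasFDerivAt (fun z' : Fin n → ℂ => (lam j : ℂ) * z' j * (1 - z' j * w j)⁻¹)
      (((lam j : ℂ) * ((1 - z j * w j)⁻¹ + z j * w j * (1 - z j * w j)⁻¹ * (1 - z j * w j)⁻¹)) •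
        (ContinuousLinearMap.proj j : (Fin n → ℂ) →L[ℂ] ℂ)) z := by
    have hp : HasFDerivAt (fun z' : Fin n → ℂ => z' j)
        (ContinuousLinearMap.proj j : (Fin n → ℂ) →L[ℂ] ℂ) z :=
      (ContinuousLinearMap.proj (R := ℂ) (φ := fun _ : Fin n => ℂ) j).hasFDerivAt
    exact hg.comp_hasFDerivAt z hp
  have hL := hasFDerivAt_Lprod lam w z hre
  have hprod := hG.mul hL
  have hfun : (fun z' : Fin n → ℂ =>
      (lam j : ℂ) * z' j * (1 - z' j * w j)⁻¹ * Lker lam z' w)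
      = fun z' : Fin n → ℂ => ((lam j : ℂ) * z' j * (1 - z' j * w j)⁻¹) *
          ∏ k, (1 - z' k * w k) ^ (-(lam k : ℂ)) := rfl
  rw [hfun, (show HasFDerivAt (fun z' : Fin n → ℂ => ((lam j : ℂ) * z' j * (1 - z' j * w j)⁻¹) *
      ∏ k, (1 - z' k * w k) ^ (-(lam k : ℂ))) _ z from hprod).fderiv]
  simp only [ContinuousLinearMap.add_apply, ContinuousLinearMap.smul_apply, smul_eq_mul]
  rw [← hL.fderiv, Lprod_fderiv_apply lam w z hre i]
  simp only [ContinuousLinearMap.smul_apply, ContinuousLinearMap.proj_apply,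
    Pi.single_apply, smul_eq_mul]
  rcases eq_or_ne i j with hij | hij
  · subst hij
    simp only [if_pos rfl, if_true, eq_self_iff_true, mul_one]
    unfold Lker; ring
  · rw [if_neg (fun hh => hij hh.symm), if_neg hij]
    unfold Lker; ring

end second

section upd
variable {n : ℕ}

lemma Lker_update_two (lam : Fin n → ℝ) (i : Fin n) (z w : Fin n → ℂ)
    (h : ∀ k, 0 < (1 - z k * w k).re) :
    Lker (Function.update lam i (lam i + 2)) z w
      = (1 - z i * w i)⁻¹ * (1 - z i * w i)⁻¹ * Lker lam z w := by
  unfold Lker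
  rw [← Finset.mul_prod_erase Finset.univ _ (Finset.mem_univ i),
    ← Finset.mul_prod_erase Finset.univ
      (fun j => (1 - z j * w j) ^ (-(lam j : ℂ))) (Finset.mem_univ i)]
  have h1 : ∏ k ∈ Finset.univ.erase i,
      (1 - z k * w k) ^ (-((Function.update lam i (lam i + 2) k : ℝ) : ℂ))
      = ∏ k ∈ Finset.univ.erase i, (1 - z k * w k) ^ (-(lam k : ℂ)) :=
    Finset.prod_congr rfl fun k hk => by
      rw [Function.update_of_ne (Finset.mem_erase.mp hk).1]
  rw [h1, Function.update_self]
  have he : (-(((lam i + 2 : ℝ)) : ℂ)) = (-(lam i : ℂ)) + (-1) + (-1) := by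
    push_cast; ring
  rw [he, Complex.cpow_add _ _ (ne_zero_aux (h i)),
    Complex.cpow_add _ _ (ne_zero_aux (h i)), Complex.cpow_neg_one]
  ring

end upd

set_option maxHeartbeats 1000000 in
/-- Closed form of the Type I kernel: the matrix `M(z,w)` built from
`L^{(λ)}` and its partial derivatives equals
`(∏ⱼ (1 − zⱼwⱼ)^{−λⱼ−2δ_{1j}−2δ_{2j}}) • (D(z,w) A(z,w) D(z,w))`. -/
theorem statement10 {m : ℕ} (lam : Fin (m + 2) → ℝ) (hpos : ∀ j, 0 < lam j)
    (μ₁ μ₂ : ℝ) (hμ₁ : 0 < μ₁) (hμ₂ : 0 < μ₂)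
    (z w : Fin (m + 2) → ℂ)
    (hz : ∀ k, ‖z k‖ < 1) (hw : ∀ k, ‖w k‖ < 1) :
    (!![Lker lam z w,
        ((lam 0 : ℂ))⁻¹ * pdw (Lker lam) 0 z w,
        ((lam 1 : ℂ))⁻¹ * pdw (Lker lam) 1 z w;
        ((lam 0 : ℂ))⁻¹ * pdz (Lker lam) 0 z w,
        ((lam 0 : ℂ))⁻¹ * ((lam 0 : ℂ))⁻¹ * pdz (pdw (Lker lam) 0) 0 z w
          + (μ₁ : ℂ) ^ 2 * Lker (Function.update lam 0 (lam 0 + 2)) z w,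
        ((lam 0 : ℂ))⁻¹ * ((lam 1 : ℂ))⁻¹ * pdz (pdw (Lker lam) 1) 0 z w;
        ((lam 1 : ℂ))⁻¹ * pdz (Lker lam) 1 z w,
        ((lam 1 : ℂ))⁻¹ * ((lam 0 : ℂ))⁻¹ * pdz (pdw (Lker lam) 0) 1 z w,
        ((lam 1 : ℂ))⁻¹ * ((lam 1 : ℂ))⁻¹ * pdz (pdw (Lker lam) 1) 1 z w
          + (μ₂ : ℂ) ^ 2 * Lker (Function.update lam 1 (lam 1 + 2)) z w] :
        Matrix (Fin 3) (Fin 3) ℂ) =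
      (∏ j, (1 - z j * w j) ^
          (-(lam j : ℂ) - (if j = 0 then 2 else 0) - (if j = 1 then 2 else 0))) •
        (Matrix.diagonal
            ![(1 - z 0 * w 0) * (1 - z 1 * w 1), 1 - z 1 * w 1, 1 - z 0 * w 0] *
          !![1, z 0, z 1;
             w 0, 1 / (lam 0 : ℂ) + (μ₁ : ℂ) ^ 2 + z 0 * w 0, w 0 * z 1;
             w 1, z 0 * w 1, 1 / (lam 1 : ℂ) + (μ₂ : ℂ) ^ 2 + z 1 * w 1] *
          Matrix.diagonal
            ![(1 - z 0 * w 0) * (1 - z 1 * w 1), 1 - z 1 * w 1, 1 - z 0 * w 0]) := by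
  have hre : ∀ k, 0 < (1 - z k * w k).re := fun k => re_pos_aux (hz k) (hw k)
  have hu0 : (1 - z 0 * w 0) ≠ 0 := ne_zero_aux (hre 0)
  have hu1 : (1 - z 1 * w 1) ≠ 0 := ne_zero_aux (hre 1)
  have hl0 : ((lam 0 : ℂ)) ≠ 0 := by exact_mod_cast (hpos 0).ne'
  have hl1 : ((lam 1 : ℂ)) ≠ 0 := by exact_mod_cast (hpos 1).ne'
  have h10 : (1 : Fin (m + 2)) ≠ 0 := by simp [Fin.ext_iff]
  have h01 : (0 : Fin (m + 2)) ≠ 1 := fun h => h10 h.symm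
  have hC : (∏ j, (1 - z j * w j) ^
        (-(lam j : ℂ) - (if j = 0 then 2 else 0) - (if j = 1 then 2 else 0)))
      = (1 - z 1 * w 1)⁻¹ * (1 - z 1 * w 1)⁻¹ *
          ((1 - z 0 * w 0)⁻¹ * (1 - z 0 * w 0)⁻¹ * Lker lam z w) := by
    have e1 : (∏ j, (1 - z j * w j) ^
          (-(lam j : ℂ) - (if j = 0 then 2 else 0) - (if j = 1 then 2 else 0)))
        = Lker (Function.update (Function.update lam 0 (lam 0 + 2)) 1 (lam 1 + 2)) z w := by
      unfold Lker
      refine Finset.prod_congr rfl fun j _ => ?_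
      congr 1
      rcases eq_or_ne j 1 with rfl | hj1
      · rw [Function.update_self, if_neg h10, if_pos rfl]
        push_cast; ring
      · rw [Function.update_of_ne hj1, if_neg hj1]
        rcases eq_or_ne j 0 with rfl | hj0
        · rw [Function.update_self, if_pos rfl]
          push_cast; ring
        · rw [Function.update_of_ne hj0, if_neg hj0]
          ring
    rw [e1]
    have e2 : Function.update (Function.update lam 0 (lam 0 + 2)) 1 (lam 1 + 2)
        = Function.update (Function.update lam 0 (lam 0 + 2)) 1
            ((Function.update lam 0 (lam 0 + 2)) 1 + 2) := by
      rw [Function.update_of_ne h10]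
    rw [e2, Lker_update_two _ 1 z w hre, Lker_update_two lam 0 z w hre]
  rw [pdw_Lker lam 0 z w hre, pdw_Lker lam 1 z w hre,
    pdz_Lker lam 0 z w hre, pdz_Lker lam 1 z w hre,
    pdzw_Lker lam 0 0 z w hre, pdzw_Lker lam 0 1 z w hre,
    pdzw_Lker lam 1 0 z w hre, pdzw_Lker lam 1 1 z w hre,
    Lker_update_two lam 0 z w hre, Lker_update_two lam 1 z w hre, hC]
  simp only [if_pos rfl, if_neg h01, if_neg h10]
  ext i j
  fin_cases i <;> fin_cases j <;>
    · simp [Matrix.mul_diagonal, Matrix.diagonal_mul]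
      field_simp
      try ring
      try tauto
end

section
/- Let n ≥ 1, let λ₁,…,λₙ > 0 be real and μ > 0. Define K : D^n × D^n → M₂(ℂ) by K(z,w) = [[ (1 − z₁w̄₁)^{−λ₁}, z₁(1 − z₁w̄₁)^{−λ₁−1} ], [ w̄₁(1 − z₁w̄₁)^{−λ₁−1}, (1/λ₁ + μ + z₁w̄₁)(1 − z₁w̄₁)^{−λ₁−2} ]] · ∏_{i=2}^n (1 − z_i w̄_i)^{−λ_i}. Then K is a positive definite kernel on D^n: for every m ≥ 1, every choice of points z⁽¹⁾,…,z⁽ᵐ⁾ ∈ D^n and every choice of vectors v₁,…,v_m ∈ ℂ², one has Σ_{p,q=1}^m ⟨ K(z⁽ᵖ⁾, z⁽ᑫ⁾) v_q, v_p ⟩ ≥ 0 (in particular this double sum is real). -/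
open Matrix
open scoped ComplexOrder

/-- The rank `2` kernel `K^{(λ,μ)}` on the polydisc `𝔻^{m+1}`. -/
noncomputable def rank2Kernel {m : ℕ} (lam : Fin (m + 1) → ℝ) (μ : ℝ)
    (z w : Fin (m + 1) → ℂ) : Matrix (Fin 2) (Fin 2) ℂ :=
  (∏ i : Fin m, (1 - z i.succ * star (w i.succ)) ^ (-(lam i.succ : ℂ))) •
    !![(1 - z 0 * star (w 0)) ^ (-(lam 0 : ℂ)),
        z 0 * (1 - z 0 * star (w 0)) ^ (-(lam 0 : ℂ) - 1);
       star (w 0) * (1 - z 0 * star (w 0)) ^ (-(lam 0 : ℂ) - 1),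
        (1 / (lam 0 : ℂ) + (μ : ℂ) + z 0 * star (w 0)) *
          (1 - z 0 * star (w 0)) ^ (-(lam 0 : ℂ) - 2)]

open Finset Complex

/-- binomial coefficient for `(1-z)^{-l}` -/
noncomputable def binCoef (l : ℝ) (k : ℕ) : ℝ := ∏ j ∈ Finset.range k, ((l + j) / (j + 1))

lemma binCoef_pos {l : ℝ} (hl : 0 < l) (k : ℕ) : 0 < binCoef l k :=
  Finset.prod_pos fun j _ => div_pos (by positivity) (by positivity)

lemma binCoef_succ (l : ℝ) (k : ℕ) :
    binCoef l (k + 1) = binCoef l k * ((l + k) / (k + 1)) := Finset.prod_range_succ _ _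

lemma R1 (l : ℝ) (k : ℕ) : (k + 1 : ℝ) * binCoef l (k + 1) = l * binCoef (l + 1) k := by
  induction k with
  | zero => simp [binCoef]
  | succ k ih =>
    have hk : (k + 1 : ℝ) ≠ 0 := by positivity
    have hk2 : (k + 2 : ℝ) ≠ 0 := by positivity
    rw [binCoef_succ l (k+1), binCoef_succ (l+1) k]
    push_cast
    field_simp
    push_cast at ih
    linear_combination (l + k + 1) * ih

lemma R2 (l : ℝ) (k : ℕ) :
    (l + 1) * binCoef (l + 2) k = (l + k + 1) * binCoef (l + 1) k := by
  induction k with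
  | zero => simp [binCoef]
  | succ k ih =>
    rw [binCoef_succ (l+2) k, binCoef_succ (l+1) k]
    have hk : (k + 1 : ℝ) ≠ 0 := by positivity
    push_cast
    field_simp
    linear_combination (l + 2 + k) * ih

noncomputable def coefB (l : ℝ) : ℕ → ℝ
  | 0 => 0
  | k + 1 => binCoef (l + 1) k

noncomputable def coefA (l μ : ℝ) : ℕ → ℝ
  | 0 => 0
  | k + 1 => (1 / l + μ) * binCoef (l + 2) k

noncomputable def coefD (l : ℝ) : ℕ → ℝ
  | 0 => 0
  | 1 => 0
  | k + 2 => binCoef (l + 2) k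

noncomputable def coefC (l μ : ℝ) (j : ℕ) : ℝ := coefA l μ j + coefD l j

lemma det_ineq {l μ : ℝ} (hl : 0 < l) (hμ : 0 < μ) (j : ℕ) :
    (coefB l j) ^ 2 ≤ binCoef l j * coefC l μ j := by
  match j with
  | 0 => simp [coefB, coefC, coefA, coefD, binCoef]
  | 1 =>
    simp only [coefB, coefC, coefA, coefD, binCoef]
    simp only [Finset.prod_range_zero, Finset.prod_range_one]
    push_cast
    have h : (l + 0) / (0 + 1) * ((1 / l + μ) * 1 + 0) = 1 + l * μ := by field_simp; ring
    rw [h]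
    nlinarith [mul_pos hl hμ]
  | (k + 2) =>
    have hB : 0 < binCoef (l + 1) (k + 1) := binCoef_pos (by linarith) _
    set B := binCoef (l + 1) (k + 1) with hBdef
    have hα : (k + 2 : ℝ) * binCoef l (k + 2) = l * B := by
      have := R1 l (k + 1); push_cast at this ⊢; linarith [this]
    have hC1 : (l + 1) * binCoef (l + 2) (k + 1) = (l + (k+1) + 1) * B := by
      have := R2 l (k + 1); push_cast at this ⊢; linarith [this]
    have hC0 : (l + 1) * binCoef (l + 2) k = (k + 1 : ℝ) * B := by
      have := R1 (l + 1) k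
      have h2 : l + 1 + 1 = l + 2 := by ring
      rw [h2] at this
      linarith [this]
    show (binCoef (l+1) (k+1)) ^ 2 ≤ binCoef l (k+2) * coefC l μ (k+2)
    have hCval : coefC l μ (k+2) = (1 / l + μ) * binCoef (l + 2) (k + 1) + binCoef (l + 2) k := by
      simp [coefC, coefA, coefD]
    rw [hCval]
    have hk2 : (0:ℝ) < k + 2 := by positivity
    have hl1 : (0:ℝ) < l + 1 := by linarith
    have hαv : binCoef l (k + 2) = l * B / (k + 2) := by field_simp; linarith [hα]
    have hC1v : binCoef (l + 2) (k + 1) = (l + (k+1) + 1) * B / (l + 1) := by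
      field_simp; linarith [hC1]
    have hC0v : binCoef (l + 2) k = (k + 1 : ℝ) * B / (l + 1) := by
      field_simp; linarith [hC0]
    rw [hαv, hC1v, hC0v, ← hBdef]
    have key : l * B / (k + 2) * ((1 / l + μ) * ((l + (k + 1) + 1) * B / (l + 1)) +
        (k + 1 : ℝ) * B / (l + 1)) - B ^ 2 = B ^ 2 * (l * μ * (l + k + 2)) / ((k + 2) * (l + 1)) := by
      field_simp
      ring
    have hD : (0:ℝ) ≤ B ^ 2 * (l * μ * (l + k + 2)) / ((k + 2) * (l + 1)) := by positivity
    linarith [key, hD]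

lemma one_sub_slit {w : ℂ} (hw : ‖w‖ < 1) : 1 - w ∈ Complex.slitPlane := by
  have := Complex.mem_slitPlane_of_norm_lt_one (z := -w) (by simpa using hw)
  simpa [sub_eq_add_neg] using this

lemma deriv_one_sub_cpow (d : ℂ) {w : ℂ} (hw : ‖w‖ < 1) :
    HasDerivAt (fun u : ℂ => (1 - u) ^ (-d)) (d * (1 - w) ^ (-d - 1)) w := by
  have h1 : HasDerivAt (fun u : ℂ => 1 - u) (-1) w := by
    simpa using (hasDerivAt_id w).const_sub 1
  have h2 := h1.cpow_const (c := -d) (one_sub_slit hw)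
  convert h2 using 1
  ring

lemma iteratedDeriv_one_sub_cpow (c : ℂ) (n : ℕ) :
    ∀ w : ℂ, ‖w‖ < 1 → iteratedDeriv n (fun u : ℂ => (1 - u) ^ (-c)) w
      = (∏ j ∈ Finset.range n, (c + j)) * (1 - w) ^ (-(c + n)) := by
  induction n with
  | zero => intro w hw; simp
  | succ n ih =>
    intro w hw
    rw [iteratedDeriv_succ]
    have hev : iteratedDeriv n (fun u : ℂ => (1 - u) ^ (-c)) =ᶠ[nhds w]
        (fun u => (∏ j ∈ Finset.range n, (c + j)) * (1 - u) ^ (-(c + n))) := by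
      filter_upwards [Metric.ball_mem_nhds w (by linarith [norm_nonneg w] : (0:ℝ) < 1 - ‖w‖)]
        with u hu
      apply ih
      have : dist u w < 1 - ‖w‖ := Metric.mem_ball.mp hu
      calc ‖u‖ ≤ ‖u - w‖ + ‖w‖ := by
            simpa using norm_add_le (u - w) w
        _ < 1 := by rw [← dist_eq_norm] at *; linarith
    rw [hev.deriv_eq]
    have hd := (deriv_one_sub_cpow (c + n) hw).const_mul (∏ j ∈ Finset.range n, (c + j))
    rw [hd.deriv, Finset.prod_range_succ]
    push_cast
    rw [show -(c + (n:ℂ)) - 1 = -(c + ((n:ℂ) + 1)) by ring]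
    ring

lemma hasSum_binomial (c : ℂ) {z : ℂ} (hz : ‖z‖ < 1) :
    HasSum (fun k : ℕ => (∏ j ∈ Finset.range k, ((c + j) / (j + 1))) * z ^ k)
      ((1 - z) ^ (-c)) := by
  have hdiff : DifferentiableOn ℂ (fun u : ℂ => (1 - u) ^ (-c)) (Metric.ball 0 1) := by
    intro u hu
    exact (deriv_one_sub_cpow c (by simpa using mem_ball_zero_iff.mp hu)).differentiableAt.differentiableWithinAt
  have H := Complex.hasSum_taylorSeries_on_ball hdiff
    (mem_ball_zero_iff.mpr (by simpa using hz))
  convert H using 2 with k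
  · rfl
  rw [iteratedDeriv_one_sub_cpow c k 0 (by simp)]
  have hfact : (∏ j ∈ Finset.range k, ((j : ℂ) + 1)) = (k.factorial : ℂ) := by
    induction k with
    | zero => simp
    | succ k ih => rw [Finset.prod_range_succ, ih]; push_cast [Nat.factorial_succ]; ring
  rw [Finset.prod_div_distrib, hfact]
  have : (1 : ℂ) - 0 = 1 := by ring
  rw [sub_zero, smul_eq_mul, smul_eq_mul, sub_zero, Complex.one_cpow]
  have hne : (k.factorial : ℂ) ≠ 0 := by exact_mod_cast k.factorial_ne_zero
  field_simp

lemma hasSum_binomial_real (l : ℝ) {z : ℂ} (hz : ‖z‖ < 1) :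
    HasSum (fun k : ℕ => (binCoef l k : ℂ) * z ^ k) ((1 - z) ^ (-(l : ℂ))) := by
  have H := hasSum_binomial (l : ℂ) hz
  convert H using 2 with k
  congr 1
  rw [binCoef]
  push_cast
  rfl

lemma hasSum_nonneg_complex {f : ℕ → ℂ} {S : ℂ} (h : HasSum f S) (hf : ∀ k, 0 ≤ f k) :
    0 ≤ S := by
  rw [Complex.hasSum_iff] at h
  rw [Complex.nonneg_iff]
  constructor
  · exact hasSum_le (fun k => (Complex.nonneg_iff.mp (hf k)).1) hasSum_zero h.1
  · refine (h.2.unique ?_).symm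
    convert hasSum_zero with k
    exact ((Complex.nonneg_iff.mp (hf k)).2).symm

lemma hasSum_shift1 {f g : ℕ → ℂ} {S : ℂ} (h : HasSum f S) (h0 : g 0 = 0)
    (hs : ∀ k, g (k + 1) = f k) : HasSum g S := by
  have : HasSum (fun n => g (n + 1)) S := by simpa [hs] using h
  simpa [h0] using (hasSum_nat_add_iff 1).mp this

lemma hasSum_shift2 {f g : ℕ → ℂ} {S : ℂ} (h : HasSum f S) (h0 : g 0 = 0) (h1 : g 1 = 0)
    (hs : ∀ k, g (k + 2) = f k) : HasSum g S := by
  have : HasSum (fun n => g (n + 2)) S := by simpa [hs] using h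
  have h2 := (hasSum_nat_add_iff 2).mp this
  simpa [Finset.sum_range_succ, h0, h1] using h2

/-- interchange: double finite sum of entrywise `HasSum` -/
lemma sum_sum_nonneg_of_hasSum {N : ℕ} {F : ℕ → Fin N → Fin N → ℂ} {T : Fin N → Fin N → ℂ}
    (h : ∀ a b, HasSum (fun k => F k a b) (T a b))
    (hk : ∀ k, 0 ≤ ∑ a, ∑ b, F k a b) :
    0 ≤ ∑ a, ∑ b, T a b := by
  have H : HasSum (fun k => ∑ a, ∑ b, F k a b) (∑ a, ∑ b, T a b) :=
    hasSum_sum fun a _ => hasSum_sum fun b _ => h a b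
  exact hasSum_nonneg_complex H hk

lemma key2x2 {N : ℕ} (G : Fin N → Fin N → ℂ)
    (hG : ∀ x : Fin N → ℂ, 0 ≤ ∑ a, ∑ b, (starRingEnd ℂ) (x a) * G a b * x b)
    {α β γ : ℝ} (hα : 0 < α) (hdet : β ^ 2 ≤ α * γ) (u0 u1 : Fin N → ℂ) :
    0 ≤ ∑ a, ∑ b, ((α : ℂ) * ((starRingEnd ℂ) (u0 a) * G a b * u0 b)
      + (β : ℂ) * ((starRingEnd ℂ) (u0 a) * G a b * u1 b)
      + (β : ℂ) * ((starRingEnd ℂ) (u1 a) * G a b * u0 b)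
      + (γ : ℂ) * ((starRingEnd ℂ) (u1 a) * G a b * u1 b)) := by
  set y : Fin N → ℂ := fun c => (α : ℂ) * u0 c + (β : ℂ) * u1 c with hy
  have key : (α : ℂ) * ∑ a, ∑ b, ((α : ℂ) * ((starRingEnd ℂ) (u0 a) * G a b * u0 b)
      + (β : ℂ) * ((starRingEnd ℂ) (u0 a) * G a b * u1 b)
      + (β : ℂ) * ((starRingEnd ℂ) (u1 a) * G a b * u0 b)
      + (γ : ℂ) * ((starRingEnd ℂ) (u1 a) * G a b * u1 b))
      = (∑ a, ∑ b, (starRingEnd ℂ) (y a) * G a b * y b)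
        + ((α * γ - β ^ 2 : ℝ) : ℂ) * ∑ a, ∑ b, (starRingEnd ℂ) (u1 a) * G a b * u1 b := by
    rw [Finset.mul_sum, Finset.mul_sum]
    rw [← Finset.sum_add_distrib]
    refine Finset.sum_congr rfl fun a _ => ?_
    rw [Finset.mul_sum, Finset.mul_sum, ← Finset.sum_add_distrib]
    refine Finset.sum_congr rfl fun b _ => ?_
    simp only [hy, map_add, _root_.map_mul, Complex.conj_ofReal]
    push_cast
    ring
  have h1 : 0 ≤ (α : ℂ) * ∑ a, ∑ b, ((α : ℂ) * ((starRingEnd ℂ) (u0 a) * G a b * u0 b)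
      + (β : ℂ) * ((starRingEnd ℂ) (u0 a) * G a b * u1 b)
      + (β : ℂ) * ((starRingEnd ℂ) (u1 a) * G a b * u0 b)
      + (γ : ℂ) * ((starRingEnd ℂ) (u1 a) * G a b * u1 b)) := by
    rw [key]
    have := hG y
    have h2 := hG u1
    have hc : (0:ℂ) ≤ ((α * γ - β ^ 2 : ℝ) : ℂ) := by
      rw [Complex.zero_le_real]; nlinarith
    exact add_nonneg this (mul_nonneg hc h2)
  have hainv : (0:ℂ) ≤ ((α⁻¹ : ℝ) : ℂ) := by rw [Complex.zero_le_real]; positivity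
  have := mul_nonneg hainv h1
  rw [← mul_assoc] at this
  rw [show ((α⁻¹ : ℝ) : ℂ) * (α : ℂ) = 1 by
    push_cast; field_simp] at this
  simpa using this

lemma norm_mul_conj_lt_one {z w : ℂ} (hz : ‖z‖ < 1) (hw : ‖w‖ < 1) :
    ‖z * (starRingEnd ℂ) w‖ < 1 := by
  rw [norm_mul, RCLike.norm_conj]
  calc ‖z‖ * ‖w‖ ≤ ‖z‖ * 1 := by
        exact mul_le_mul_of_nonneg_left hw.le (norm_nonneg z)
    _ < 1 := by simpa using hz

lemma prodKernel_pos {N : ℕ} {ι : Type*} [DecidableEq ι] (ζ : Fin N → ι → ℂ)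
    (hζ : ∀ a i, ‖ζ a i‖ < 1) (l : ι → ℝ) (hl : ∀ i, 0 < l i) (s : Finset ι) :
    ∀ x : Fin N → ℂ, 0 ≤ ∑ a, ∑ b, (starRingEnd ℂ) (x a) *
      (∏ i ∈ s, (1 - ζ a i * (starRingEnd ℂ) (ζ b i)) ^ (-(l i : ℂ))) * x b := by
  induction s using Finset.induction_on with
  | empty =>
    intro x
    simp only [Finset.prod_empty, mul_one]
    have : ∑ a, ∑ b, (starRingEnd ℂ) (x a) * x b
        = (starRingEnd ℂ) (∑ a, x a) * (∑ b, x b) := by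
      rw [map_sum, Finset.sum_mul]
      exact Finset.sum_congr rfl fun a _ => by rw [Finset.mul_sum]
    rw [this]
    exact star_mul_self_nonneg _
  | @insert i s his ih =>
    intro x
    refine sum_sum_nonneg_of_hasSum (F := fun k a b =>
      ((binCoef (l i) k : ℝ) : ℂ) * ((starRingEnd ℂ) (x a * ((starRingEnd ℂ) (ζ a i)) ^ k) *
        (∏ j ∈ s, (1 - ζ a j * (starRingEnd ℂ) (ζ b j)) ^ (-(l j : ℂ))) *
        (x b * ((starRingEnd ℂ) (ζ b i)) ^ k))) ?_ ?_
    · intro a b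
      have hx : ‖ζ a i * (starRingEnd ℂ) (ζ b i)‖ < 1 :=
        norm_mul_conj_lt_one (hζ a i) (hζ b i)
      have hb := (hasSum_binomial_real (l i) hx).mul_left
        ((starRingEnd ℂ) (x a) * (∏ j ∈ s, (1 - ζ a j * (starRingEnd ℂ) (ζ b j)) ^ (-(l j : ℂ))) * x b)
      rw [Finset.prod_insert his]
      convert hb using 1
      · rfl
      · funext k
        simp only [_root_.map_mul, _root_.map_pow, RingHom.id_apply, Complex.conj_conj]
        rw [mul_pow]
        ring
      · ring
    · intro k
      have hterm : ∀ a b : Fin N, ((binCoef (l i) k : ℝ) : ℂ) *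
          ((starRingEnd ℂ) (x a * ((starRingEnd ℂ) (ζ a i)) ^ k) *
          (∏ j ∈ s, (1 - ζ a j * (starRingEnd ℂ) (ζ b j)) ^ (-(l j : ℂ))) *
          (x b * ((starRingEnd ℂ) (ζ b i)) ^ k)) = _ := fun a b => rfl
      have : ∑ a, ∑ b, ((binCoef (l i) k : ℝ) : ℂ) *
          ((starRingEnd ℂ) ((fun c => x c * ((starRingEnd ℂ) (ζ c i)) ^ k) a) *
          (∏ j ∈ s, (1 - ζ a j * (starRingEnd ℂ) (ζ b j)) ^ (-(l j : ℂ))) *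
          ((fun c => x c * ((starRingEnd ℂ) (ζ c i)) ^ k) b))
          = ((binCoef (l i) k : ℝ) : ℂ) * ∑ a, ∑ b,
          ((starRingEnd ℂ) ((fun c => x c * ((starRingEnd ℂ) (ζ c i)) ^ k) a) *
          (∏ j ∈ s, (1 - ζ a j * (starRingEnd ℂ) (ζ b j)) ^ (-(l j : ℂ))) *
          ((fun c => x c * ((starRingEnd ℂ) (ζ c i)) ^ k) b)) := by
        rw [Finset.mul_sum]
        exact Finset.sum_congr rfl fun a _ => by rw [Finset.mul_sum]
      rw [this]
      exact mul_nonneg (by rw [Complex.zero_le_real]; exact (binCoef_pos (hl i) k).le)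
        (ih (fun c => x c * ((starRingEnd ℂ) (ζ c i)) ^ k))

/-- For `λᵢ > 0` and `μ > 0`, the kernel `K^{(λ,μ)}` is positive
definite on the polydisc: all the Gram-type double sums are nonnegative. -/
theorem statement12 {m : ℕ} (lam : Fin (m + 1) → ℝ) (hlam : ∀ i, 0 < lam i)
    (μ : ℝ) (hμ : 0 < μ) :
    ∀ N : ℕ, 1 ≤ N → ∀ p : Fin N → (Fin (m + 1) → ℂ),
      (∀ a i, ‖p a i‖ < 1) →
      ∀ v : Fin N → (Fin 2 → ℂ),
        0 ≤ ∑ a, ∑ b,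
          dotProduct (star (v a)) ((rank2Kernel lam μ (p a) (p b)).mulVec (v b)) := by
  intro N _ p hp v
  have hp' : ∀ (a : Fin N) (i : Fin (m + 1)), ‖p a i‖ < 1 := fun a i => hp a i
  set l : ℝ := lam 0 with hldef
  have hl : 0 < l := hlam 0
  set g : Fin N → Fin N → ℂ := fun a b =>
    ∏ i : Fin m, (1 - p a i.succ * (starRingEnd ℂ) (p b i.succ)) ^ (-(lam i.succ : ℂ)) with hg
  have hG : ∀ x : Fin N → ℂ, 0 ≤ ∑ a, ∑ b, (starRingEnd ℂ) (x a) * g a b * x b := by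
    intro x
    have := prodKernel_pos (fun a (i : Fin m) => p a i.succ) (fun a i => hp' a i.succ)
      (fun i => lam i.succ) (fun i => hlam i.succ) Finset.univ x
    simpa using this
  -- the sequence of auxiliary vectors
  set u0 : ℕ → Fin N → ℂ := fun j c => v c 0 * ((starRingEnd ℂ) (p c 0)) ^ j with hu0
  set u1 : ℕ → Fin N → ℂ := fun j c => v c 1 * ((starRingEnd ℂ) (p c 0)) ^ (j - 1) with hu1
  refine sum_sum_nonneg_of_hasSum (F := fun j a b =>
      ((binCoef l j : ℝ) : ℂ) * ((starRingEnd ℂ) (u0 j a) * g a b * u0 j b)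
      + ((coefB l j : ℝ) : ℂ) * ((starRingEnd ℂ) (u0 j a) * g a b * u1 j b)
      + ((coefB l j : ℝ) : ℂ) * ((starRingEnd ℂ) (u1 j a) * g a b * u0 j b)
      + ((coefC l μ j : ℝ) : ℂ) * ((starRingEnd ℂ) (u1 j a) * g a b * u1 j b)) ?_ ?_
  · -- per-pair HasSum
    intro a b
    set x0 : ℂ := p a 0 * (starRingEnd ℂ) (p b 0) with hx0def
    have hx0 : ‖x0‖ < 1 := norm_mul_conj_lt_one (hp' a 0) (hp' b 0)
    have e1 : (-(((l + 1 : ℝ)) : ℂ)) = -(l : ℂ) - 1 := by push_cast; ring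
    have e2 : (-(((l + 2 : ℝ)) : ℂ)) = -(l : ℂ) - 2 := by push_cast; ring
    -- four/five constituent series
    have h00 := (hasSum_binomial_real l hx0).mul_left
      ((starRingEnd ℂ) (v a 0) * g a b * v b 0)
    have h01x := (hasSum_binomial_real (l + 1) hx0).mul_left
      ((starRingEnd ℂ) (v a 0) * g a b * v b 1 * p a 0)
    rw [e1] at h01x
    have h01 : HasSum (fun j => ((coefB l j : ℝ) : ℂ) *
        ((starRingEnd ℂ) (u0 j a) * g a b * u1 j b))
        ((starRingEnd ℂ) (v a 0) * g a b * v b 1 * p a 0 * (1 - x0) ^ (-(l:ℂ) - 1)) := by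
      refine hasSum_shift1 h01x (by simp [coefB]) fun k => ?_
      show ((coefB l (k+1) : ℝ) : ℂ) * ((starRingEnd ℂ) (u0 (k+1) a) * g a b * u1 (k+1) b) = _
      simp only [coefB, hu0, hu1, Nat.add_sub_cancel, _root_.map_mul, _root_.map_pow, Complex.conj_conj]
      rw [hx0def, mul_pow]
      ring
    have h10x := (hasSum_binomial_real (l + 1) hx0).mul_left
      ((starRingEnd ℂ) (v a 1) * g a b * v b 0 * (starRingEnd ℂ) (p b 0))
    rw [e1] at h10x
    have h10 : HasSum (fun j => ((coefB l j : ℝ) : ℂ) *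
        ((starRingEnd ℂ) (u1 j a) * g a b * u0 j b))
        ((starRingEnd ℂ) (v a 1) * g a b * v b 0 * (starRingEnd ℂ) (p b 0) *
          (1 - x0) ^ (-(l:ℂ) - 1)) := by
      refine hasSum_shift1 h10x (by simp [coefB]) fun k => ?_
      show ((coefB l (k+1) : ℝ) : ℂ) * ((starRingEnd ℂ) (u1 (k+1) a) * g a b * u0 (k+1) b) = _
      simp only [coefB, hu0, hu1, Nat.add_sub_cancel, _root_.map_mul, _root_.map_pow, Complex.conj_conj]
      rw [hx0def, mul_pow]
      ring
    have hAx := (hasSum_binomial_real (l + 2) hx0).mul_left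
      ((starRingEnd ℂ) (v a 1) * g a b * v b 1 * (((1 / l + μ : ℝ)) : ℂ))
    rw [e2] at hAx
    have hA : HasSum (fun j => ((coefA l μ j : ℝ) : ℂ) *
        ((starRingEnd ℂ) (u1 j a) * g a b * u1 j b))
        ((starRingEnd ℂ) (v a 1) * g a b * v b 1 * (((1 / l + μ : ℝ)) : ℂ) *
          (1 - x0) ^ (-(l:ℂ) - 2)) := by
      refine hasSum_shift1 hAx (by simp [coefA]) fun k => ?_
      show ((coefA l μ (k+1) : ℝ) : ℂ) * ((starRingEnd ℂ) (u1 (k+1) a) * g a b * u1 (k+1) b) = _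
      simp only [coefA, hu1, Nat.add_sub_cancel, _root_.map_mul, _root_.map_pow, Complex.conj_conj]
      rw [hx0def, mul_pow]
      push_cast
      ring
    have hBx := (hasSum_binomial_real (l + 2) hx0).mul_left
      ((starRingEnd ℂ) (v a 1) * g a b * v b 1 * x0)
    rw [e2] at hBx
    have hB : HasSum (fun j => ((coefD l j : ℝ) : ℂ) *
        ((starRingEnd ℂ) (u1 j a) * g a b * u1 j b))
        ((starRingEnd ℂ) (v a 1) * g a b * v b 1 * x0 * (1 - x0) ^ (-(l:ℂ) - 2)) := by
      refine hasSum_shift2 hBx (by simp [coefD]) (by simp [coefD]) fun k => ?_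
      show ((coefD l (k+2) : ℝ) : ℂ) * ((starRingEnd ℂ) (u1 (k+2) a) * g a b * u1 (k+2) b) = _
      simp only [coefD, hu1, Nat.add_sub_cancel, _root_.map_mul, _root_.map_pow, Complex.conj_conj]
      rw [hx0def, mul_pow, show k + 2 - 1 = k + 1 from rfl]
      ring
    have hsum := h00.add (h01.add (h10.add (hA.add hB)))
    convert hsum using 1
    · rfl
    · funext j
      simp only [coefC, hu0, hu1, _root_.map_mul, _root_.map_pow, Complex.conj_conj]
      push_cast
      ring
    · -- value identity
      have hT : dotProduct (star (v a))
          ((rank2Kernel lam μ (p a) (p b)).mulVec (v b)) =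
          g a b * ((starRingEnd ℂ) (v a 0) *
            ((1 - x0) ^ (-(l:ℂ)) * v b 0 + p a 0 * (1 - x0) ^ (-(l:ℂ)-1) * v b 1)
          + (starRingEnd ℂ) (v a 1) *
            ((starRingEnd ℂ) (p b 0) * (1 - x0) ^ (-(l:ℂ)-1) * v b 0
              + (1/(l:ℂ) + (μ:ℂ) + x0) * (1 - x0) ^ (-(l:ℂ)-2) * v b 1)) := by
        simp [rank2Kernel, dotProduct, Matrix.mulVec, Fin.sum_univ_two,
          Complex.star_def, hg, hx0def, hldef]
        ring
      rw [hT]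
      have hcast : ((((1 : ℝ) / l + μ : ℝ)) : ℂ) = 1/(l:ℂ) + (μ:ℂ) := by push_cast; ring
      rw [hcast]
      ring
  · -- per-index nonnegativity
    intro j
    exact key2x2 g hG (binCoef_pos hl j) (det_ineq hl hμ j) (u0 j) (u1 j)
end
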